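/- arXiv:2005.00404 — 3 statements merged into one kernel-verified Lean document; each statement's English description precedes it below -/
import Mathlib

section
/- Reduction of the totality problem to the alternation problem: let T be a type with exactly two distinct elements a₁ and a₂, and let G be a context-free grammar over T with start symbol S. Let G′ be the grammar obtained from G by adding a fresh nonterminal S′, taken as the new start symbol, with the two production rules S′ ⇒ a₁ S a₂ and S′ ⇒ a₁ a₂. Then the language of G′ contains every word of the form a₁ w a₂ (for every word w over T) if and only if the language of G contains every nonempty word over T. -/
open Symbol in
/-- The grammar G′ obtained from G by adding a fresh nonterminal S′ (the new start
symbol) with the production rules S′ ⇒ a₁ S a₂ and S′ ⇒ a₁ a₂. -/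
noncomputable def extendGrammar {T : Type} (G : ContextFreeGrammar T) (a₁ a₂ : T) :
    ContextFreeGrammar T :=
  haveI : DecidableEq (ContextFreeRule T (Option G.NT)) := Classical.decEq _
  { NT := Option G.NT
    initial := none
    rules :=
      insert
        ⟨none, [Symbol.terminal a₁, Symbol.nonterminal (some G.initial), Symbol.terminal a₂]⟩
        (insert
          (⟨none, [Symbol.terminal a₁, Symbol.terminal a₂]⟩ : ContextFreeRule T (Option G.NT))
          (G.rules.image fun r =>
            ⟨some r.input, r.output.map fun x =>
              match x with
              | Symbol.terminal t => Symbol.terminal t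
              | Symbol.nonterminal n => Symbol.nonterminal (some n)⟩)) }

namespace ExtendAux

variable {T : Type}

open Symbol ContextFreeGrammar

/-- Lift a symbol over `G.NT` to a symbol over `Option G.NT`. -/
def liftS (G : ContextFreeGrammar T) : Symbol T G.NT → Symbol T (Option G.NT)
  | Symbol.terminal t => Symbol.terminal t
  | Symbol.nonterminal n => Symbol.nonterminal (some n)

lemma liftS_eq (G : ContextFreeGrammar T) :
    (fun x : Symbol T G.NT => match x with
      | Symbol.terminal t => Symbol.terminal t
      | Symbol.nonterminal n => Symbol.nonterminal (some n)) = liftS G := by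
  funext x; cases x <;> rfl

lemma liftS_eq_terminal {G : ContextFreeGrammar T} {s : Symbol T G.NT} {t : T}
    (h : liftS G s = Symbol.terminal t) : s = Symbol.terminal t := by
  cases s <;> simp_all [liftS]

lemma liftS_list_eq_terminal {G : ContextFreeGrammar T} {v : List (Symbol T G.NT)} {x : List T}
    (h : v.map (liftS G) = x.map Symbol.terminal) : v = x.map Symbol.terminal := by
  induction v generalizing x with
  | nil => cases x <;> simp_all
  | cons s v ih =>
    cases x with
    | nil => simp at h
    | cons t x =>
      simp only [List.map_cons, List.cons.injEq] at h ⊢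
      exact ⟨liftS_eq_terminal h.1, ih h.2⟩

/-- Lift a rule. -/
def liftR (G : ContextFreeGrammar T) (r : ContextFreeRule T G.NT) :
    ContextFreeRule T (Option G.NT) :=
  ⟨some r.input, r.output.map (liftS G)⟩

lemma mem_extend_rules_iff {G : ContextFreeGrammar T} {a₁ a₂ : T}
    {r : ContextFreeRule T (Option G.NT)} :
    r ∈ (extendGrammar G a₁ a₂).rules ↔
      r = ⟨none, [Symbol.terminal a₁, Symbol.nonterminal (some G.initial), Symbol.terminal a₂]⟩ ∨
      r = ⟨none, [Symbol.terminal a₁, Symbol.terminal a₂]⟩ ∨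
      ∃ r₀ ∈ G.rules, liftR G r₀ = r := by
  delta extendGrammar
  simp [liftS_eq, liftR]

lemma produces_up {G : ContextFreeGrammar T} {a₁ a₂ : T} {u v : List (Symbol T G.NT)}
    (h : G.Produces u v) :
    (extendGrammar G a₁ a₂).Produces (u.map (liftS G)) (v.map (liftS G)) := by
  obtain ⟨r, hr, hrw⟩ := h
  obtain ⟨p, q, rfl, rfl⟩ := hrw.exists_parts
  refine ⟨liftR G r, mem_extend_rules_iff.2 (Or.inr (Or.inr ⟨r, hr, rfl⟩)), ?_⟩
  have := (liftR G r).rewrites_of_exists_parts (p.map (liftS G)) (q.map (liftS G))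
  delta extendGrammar at *
  simpa [liftR, liftS] using this

lemma derives_up {G : ContextFreeGrammar T} {a₁ a₂ : T} {u v : List (Symbol T G.NT)}
    (h : G.Derives u v) :
    (extendGrammar G a₁ a₂).Derives (u.map (liftS G)) (v.map (liftS G)) := by
  induction h with
  | refl => rfl
  | tail _ last ih => exact ih.trans_produces (produces_up last)

lemma produces_down {G : ContextFreeGrammar T} {a₁ a₂ : T} {u : List (Symbol T G.NT)}
    {v' : List (Symbol T (Option G.NT))}
    (h : (extendGrammar G a₁ a₂).Produces (u.map (liftS G)) v') :
    ∃ v, v' = v.map (liftS G) ∧ G.Produces u v := by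
  delta extendGrammar at h
  obtain ⟨r, hr, hrw⟩ := h
  obtain ⟨p, q, hu, rfl⟩ := hrw.exists_parts
  rw [List.append_assoc] at hu
  rw [List.map_eq_append_iff] at hu
  obtain ⟨p₀, m, rfl, rfl, hm⟩ := hu
  rw [List.map_eq_append_iff] at hm
  obtain ⟨m₁, q₀, rfl, hm₁, rfl⟩ := hm
  cases m₁ with
  | nil => simp at hm₁
  | cons x xs =>
    cases xs with
    | cons y ys => simp at hm₁
    | nil =>
      simp only [List.map_cons, List.map_nil, List.cons.injEq, and_true] at hm₁
      cases x with
      | terminal t => simp [liftS] at hm₁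
      | nonterminal n =>
        simp only [liftS, Symbol.nonterminal.injEq] at hm₁
        rcases mem_extend_rules_iff.1 hr with rfl | rfl | ⟨r₀, hr₀, rfl⟩
        · simp at hm₁
        · simp at hm₁
        · have hin : r₀.input = n := by
            simp only [liftR] at hm₁
            exact (Option.some.inj hm₁).symm
          refine ⟨p₀ ++ r₀.output ++ q₀, by simp [liftR], ?_⟩
          refine ⟨r₀, hr₀, ?_⟩
          rw [← List.append_assoc]
          have := r₀.rewrites_of_exists_parts p₀ q₀
          rwa [hin] at this

lemma derives_down {G : ContextFreeGrammar T} {a₁ a₂ : T} {u : List (Symbol T G.NT)}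
    {v' : List (Symbol T (Option G.NT))}
    (h : (extendGrammar G a₁ a₂).Derives (u.map (liftS G)) v') :
    ∃ v, v' = v.map (liftS G) ∧ G.Derives u v := by
  induction h with
  | refl => exact ⟨u, rfl, by rfl⟩
  | tail _ last ih =>
    obtain ⟨v, rfl, hv⟩ := ih
    obtain ⟨w, rfl, hw⟩ := produces_down last
    exact ⟨w, rfl, hv.trans_produces hw⟩

lemma derives_map_terminal_eq {G : ContextFreeGrammar T} {x : List T}
    {v : List (Symbol T G.NT)} (h : G.Derives (x.map Symbol.terminal) v) :
    v = x.map Symbol.terminal := by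
  rcases h.eq_or_head with heq | ⟨m, ⟨r, _, hrw⟩, _⟩
  · exact heq.symm
  · exfalso
    obtain ⟨p, q, hu, -⟩ := hrw.exists_parts
    have : Symbol.nonterminal r.input ∈ x.map (Symbol.terminal (N := G.NT)) := by
      rw [hu]; simp
    simp at this

lemma rewrites_cons_terminal {N : Type*} {r : ContextFreeRule T N} {a : T}
    {s v : List (Symbol T N)} (h : r.Rewrites (Symbol.terminal a :: s) v) :
    ∃ v', v = Symbol.terminal a :: v' ∧ r.Rewrites s v' := by
  cases h with
  | cons x hrs => exact ⟨_, rfl, hrs⟩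

lemma derives_cons_terminal {G : ContextFreeGrammar T} {a : T}
    {s v : List (Symbol T G.NT)} (h : G.Derives (Symbol.terminal a :: s) v) :
    ∃ v', v = Symbol.terminal a :: v' ∧ G.Derives s v' := by
  induction h with
  | refl => exact ⟨s, rfl, by rfl⟩
  | tail _ last ih =>
    obtain ⟨v', rfl, hv⟩ := ih
    obtain ⟨r, hr, hrw⟩ := last
    obtain ⟨w, rfl, hw⟩ := rewrites_cons_terminal hrw
    exact ⟨w, rfl, hv.trans_produces ⟨r, hr, hw⟩⟩

lemma rewrites_append_terminal {N : Type*} {r : ContextFreeRule T N} {a : T}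
    {s v : List (Symbol T N)} (h : r.Rewrites (s ++ [Symbol.terminal a]) v) :
    ∃ v', v = v' ++ [Symbol.terminal a] ∧ r.Rewrites s v' := by
  obtain ⟨p, q, hu, rfl⟩ := h.exists_parts
  rcases q.eq_nil_or_concat with rfl | ⟨q', y, rfl⟩
  · exfalso
    rw [List.append_nil] at hu
    have := (List.append_inj' hu rfl).2
    simp at this
  · simp only [List.concat_eq_append] at hu ⊢
    rw [← List.append_assoc] at hu
    obtain ⟨hs, hy⟩ := List.append_inj' hu rfl
    simp only [List.cons.injEq] at hy
    refine ⟨p ++ r.output ++ q', by rw [hy.1]; simp, ?_⟩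
    rw [hs]
    exact r.rewrites_of_exists_parts p q'

lemma derives_append_terminal {G : ContextFreeGrammar T} {a : T}
    {s v : List (Symbol T G.NT)} (h : G.Derives (s ++ [Symbol.terminal a]) v) :
    ∃ v', v = v' ++ [Symbol.terminal a] ∧ G.Derives s v' := by
  induction h with
  | refl => exact ⟨s, rfl, by rfl⟩
  | tail _ last ih =>
    obtain ⟨v', rfl, hv⟩ := ih
    obtain ⟨r, hr, hrw⟩ := last
    obtain ⟨w, rfl, hw⟩ := rewrites_append_terminal hrw
    exact ⟨w, rfl, hv.trans_produces ⟨r, hr, hw⟩⟩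

end ExtendAux

open ExtendAux in
/-- Reduction of the totality problem to the alternation problem: over an alphabet with
exactly two distinct elements a₁ and a₂, the language of G′ contains every word of the
form a₁ w a₂ iff the language of G contains every nonempty word. -/
theorem extendGrammar_alternation_iff_total {T : Type} (a₁ a₂ : T)
    (hne : a₁ ≠ a₂) (hall : ∀ t : T, t = a₁ ∨ t = a₂) (G : ContextFreeGrammar T) :
    (∀ w : List T, a₁ :: (w ++ [a₂]) ∈ (extendGrammar G a₁ a₂).language) ↔
      (∀ w : List T, w ≠ [] → w ∈ G.language) := by
  constructor
  · intro h w hw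
    have hd := h w
    rw [ContextFreeGrammar.mem_language_iff] at hd
    rcases hd.eq_or_head with heq | ⟨v, ⟨r, hr, hrw⟩, hdv⟩
    · exfalso
      have := congrArg List.length heq
      simp at this
    obtain ⟨p, q, h1, h2⟩ := hrw.exists_parts
    have hlen := congrArg List.length h1
    simp only [List.length_append, List.length_cons, List.length_nil] at hlen
    have hp : p = [] := List.eq_nil_of_length_eq_zero (by omega)
    have hq : q = [] := List.eq_nil_of_length_eq_zero (by omega)
    subst hp hq
    simp only [List.nil_append, List.append_nil, List.cons.injEq] at h1
    have hinput : (none : Option G.NT) = r.input := Symbol.nonterminal.inj h1.1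
    rw [List.append_nil, List.nil_append] at h2
    subst h2
    rcases mem_extend_rules_iff.1 hr with rfl | rfl | ⟨r₀, hr₀, rfl⟩
    · -- rule S' ⇒ a₁ S a₂
      have hv : ([Symbol.terminal a₁, Symbol.nonterminal G.initial, Symbol.terminal a₂] :
          List (Symbol T G.NT)).map (liftS G) =
          [Symbol.terminal a₁, Symbol.nonterminal (some G.initial), Symbol.terminal a₂] := rfl
      rw [← hv] at hdv
      obtain ⟨v₀, hv₀, hGd⟩ := derives_down hdv
      have : v₀ = (a₁ :: (w ++ [a₂])).map Symbol.terminal :=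
        liftS_list_eq_terminal hv₀.symm
      subst this
      rw [ContextFreeGrammar.mem_language_iff]
      have hshape : ([Symbol.terminal a₁, Symbol.nonterminal G.initial, Symbol.terminal a₂] :
          List (Symbol T G.NT)) =
          Symbol.terminal a₁ :: ([Symbol.nonterminal G.initial] ++ [Symbol.terminal a₂]) := rfl
      rw [hshape] at hGd
      obtain ⟨v₁, hv₁, hGd₁⟩ := derives_cons_terminal hGd
      have hv₁' : v₁ = w.map Symbol.terminal ++ [Symbol.terminal a₂] := by
        simpa using hv₁.symm
      rw [hv₁'] at hGd₁
      obtain ⟨v₂, hv₂, hGd₂⟩ := derives_append_terminal hGd₁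
      have hv₂' : v₂ = w.map Symbol.terminal := (List.append_inj' hv₂ rfl).1.symm
      rwa [hv₂'] at hGd₂
    · -- rule S' ⇒ a₁ a₂
      exfalso
      have hv : ([a₁, a₂].map (Symbol.terminal (N := Option G.NT))) =
          [Symbol.terminal a₁, Symbol.terminal a₂] := rfl
      rw [← hv] at hdv
      have heq := derives_map_terminal_eq hdv
      have hlen2 := congrArg List.length heq
      simp only [List.length_map, List.length_cons, List.length_append,
        List.length_nil] at hlen2
      exact hw (List.eq_nil_of_length_eq_zero (by omega))
    · exfalso
      simp [liftR] at hinput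
  · intro h w
    rw [ContextFreeGrammar.mem_language_iff]
    by_cases hw : w = []
    · subst hw
      refine ContextFreeGrammar.Produces.single ⟨⟨none, [Symbol.terminal a₁, Symbol.terminal a₂]⟩,
        mem_extend_rules_iff.2 (Or.inr (Or.inl rfl)), ?_⟩
      exact ContextFreeRule.Rewrites.input_output
    · have hGd := h w hw
      rw [ContextFreeGrammar.mem_language_iff] at hGd
      have hstep : (extendGrammar G a₁ a₂).Produces [Symbol.nonterminal none]
          [Symbol.terminal a₁, Symbol.nonterminal (some G.initial), Symbol.terminal a₂] :=
        ⟨⟨none, [Symbol.terminal a₁, Symbol.nonterminal (some G.initial), Symbol.terminal a₂]⟩,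
          mem_extend_rules_iff.2 (Or.inl rfl), ContextFreeRule.Rewrites.input_output⟩
      have hup := derives_up (a₁ := a₁) (a₂ := a₂) hGd
      change (extendGrammar G a₁ a₂).Derives [Symbol.nonterminal (some G.initial)]
        (List.map (liftS G) (List.map Symbol.terminal w)) at hup
      have hup' : (extendGrammar G a₁ a₂).Derives
          ([Symbol.terminal a₁] ++ [Symbol.nonterminal (some G.initial)] ++ [Symbol.terminal a₂])
          ([Symbol.terminal a₁] ++ (w.map Symbol.terminal) ++ [Symbol.terminal a₂]) := by
        have hcast := (hup.append_left [Symbol.terminal a₁]).append_right [Symbol.terminal a₂]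
        convert hcast using 2
        · rfl
        clear hcast hup
        have e : ∀ l : List T, (l.map Symbol.terminal : List (Symbol T (Option G.NT))) =
            (l.map Symbol.terminal).map (liftS G) := by
          intro l
          induction l with
          | nil => rfl
          | cons b bs ih => simp [liftS, ih]
        exact congrArg _ (e w)
      refine hstep.trans_derives ?_
      convert hup' using 1 <;> simp <;> rfl
end

section
/- Completeness for the *-external fragment with respect to language models: a *-external sequent is derivable in L*ω if and only if it is true in every L-model, i.e., for every type Σ and every valuation of the variables by formal languages over Σ. -/
/-- Formulas of the Lambek calculus with iteration L*ω: variables `p n`,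
left division `A \ B`, right division `B / A` (written `rdiv B A`),
product `A · B` and Kleene star `A*`. -/
inductive LFormula : Type
  | var : ℕ → LFormula
  | ldiv : LFormula → LFormula → LFormula   -- ldiv A B  is  A \ B
  | rdiv : LFormula → LFormula → LFormula   -- rdiv B A  is  B / A
  | mul : LFormula → LFormula → LFormula    -- A · B
  | star : LFormula → LFormula              -- A*
  deriving DecidableEq

/-- Derivability in L*ω, as the least set of sequents (`LDer Γ B` means `Γ → B` is
derivable) containing the identity axioms and closed under the rules of the calculus,
including the ω-rule for Kleene star. -/
inductive LDer : List LFormula → LFormula → Prop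
  /-- identity axiom A → A -/
  | id (A : LFormula) : LDer [A] A
  /-- (\→): from Π → A and Γ,B,Δ → C infer Γ,Π,A\B,Δ → C -/
  | ldiv_left (P Γ Δ : List LFormula) (A B C : LFormula) :
      LDer P A → LDer (Γ ++ [B] ++ Δ) C →
      LDer (Γ ++ P ++ [LFormula.ldiv A B] ++ Δ) C
  /-- (→\): from A,Π → B infer Π → A\B -/
  | ldiv_right (P : List LFormula) (A B : LFormula) :
      LDer (A :: P) B → LDer P (LFormula.ldiv A B)
  /-- (/→): from Π → A and Γ,B,Δ → C infer Γ,B/A,Π,Δ → C -/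
  | rdiv_left (P Γ Δ : List LFormula) (A B C : LFormula) :
      LDer P A → LDer (Γ ++ [B] ++ Δ) C →
      LDer (Γ ++ [LFormula.rdiv B A] ++ P ++ Δ) C
  /-- (→/): from Π,A → B infer Π → B/A -/
  | rdiv_right (P : List LFormula) (A B : LFormula) :
      LDer (P ++ [A]) B → LDer P (LFormula.rdiv B A)
  /-- (·→): from Γ,A,B,Δ → C infer Γ,A·B,Δ → C -/
  | mul_left (Γ Δ : List LFormula) (A B C : LFormula) :
      LDer (Γ ++ [A, B] ++ Δ) C → LDer (Γ ++ [LFormula.mul A B] ++ Δ) C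
  /-- (→·): from Γ → A and Δ → B infer Γ,Δ → A·B -/
  | mul_right (Γ Δ : List LFormula) (A B : LFormula) :
      LDer Γ A → LDer Δ B → LDer (Γ ++ Δ) (LFormula.mul A B)
  /-- (*→)_ω: from Γ,Aⁿ,Δ → C for every n ≥ 0 infer Γ,A*,Δ → C -/
  | star_left (Γ Δ : List LFormula) (A C : LFormula) :
      (∀ n : ℕ, LDer (Γ ++ List.replicate n A ++ Δ) C) →
      LDer (Γ ++ [LFormula.star A] ++ Δ) C
  /-- (→*)_n: from Π₁ → A, …, Π_n → A infer Π₁,…,Π_n → A* -/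
  | star_right (Ps : List (List LFormula)) (A : LFormula) :
      (∀ P ∈ Ps, LDer P A) → LDer Ps.flatten (LFormula.star A)


/-- A formula is product-free if it is built from variables using only \\ and /. -/
def ProdFree : LFormula → Prop
  | LFormula.var _ => True
  | LFormula.ldiv A B => ProdFree A ∧ ProdFree B
  | LFormula.rdiv B A => ProdFree B ∧ ProdFree A
  | LFormula.mul _ _ => False
  | LFormula.star _ => False

/-- A formula is *-external if no · or * occurs in it within the scope of \\ or /. -/
inductive StarExt : LFormula → Prop
  | pf {A : LFormula} : ProdFree A → StarExt A
  | mul {A B : LFormula} : StarExt A → StarExt B → StarExt (LFormula.mul A B)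
  | star {A : LFormula} : StarExt A → StarExt (LFormula.star A)

/-- Interpretation of L*ω formulas in a language model: a valuation `w` of the
variables by formal languages over Σ extends to all formulas, divisions being
interpreted by the residuals of concatenation and * by the Kleene star. -/
def LEval {σ : Type} (w : ℕ → Language σ) : LFormula → Language σ
  | LFormula.var n => w n
  | LFormula.ldiv A B => {u | ∀ x ∈ LEval w A, x ++ u ∈ LEval w B}
  | LFormula.rdiv B A => {u | ∀ x ∈ LEval w A, u ++ x ∈ LEval w B}
  | LFormula.mul A B => LEval w A * LEval w B
  | LFormula.star A => KStar.kstar (LEval w A)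

namespace LCut

/-- size of a formula -/
def sz : LFormula → ℕ
  | .var _ => 1
  | .ldiv A B => sz A + sz B + 1
  | .rdiv B A => sz B + sz A + 1
  | .mul A B => sz A + sz B + 1
  | .star A => sz A + 1

/-- cut with cut formula A -/
def CutF (A : LFormula) : Prop :=
  ∀ T Γ Δ C, LDer T A → LDer (Γ ++ A :: Δ) C → LDer (Γ ++ T ++ Δ) C

theorem cons_split {α : Type*} {Γ Δ m₁ m₂ : List α} {a : α} (h : Γ ++ a :: Δ = m₁ ++ m₂) :
    (∃ t, m₁ = Γ ++ a :: t ∧ Δ = t ++ m₂) ∨ (∃ t, m₂ = t ++ a :: Δ ∧ Γ = m₁ ++ t) := by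
  rcases List.append_eq_append_iff.mp h with ⟨t, h1, h2⟩ | ⟨t, h1, h2⟩
  · cases t with
    | nil =>
      right
      refine ⟨[], by simpa using h2.symm, ?_⟩
      simpa using h1.symm
    | cons b t =>
      obtain ⟨rfl, rfl⟩ : a = b ∧ Δ = t ++ m₂ := by
        constructor
        · exact (List.cons.injEq _ _ _ _ ▸ h2).1
        · exact (List.cons.injEq _ _ _ _ ▸ h2).2
      left; exact ⟨t, by simpa using h1, rfl⟩
  · right; exact ⟨t, h2, h1⟩

theorem flatten_split {α : Type*} :
    ∀ (Ps : List (List α)) {Γ Δ : List α} {a : α},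
    Ps.flatten = Γ ++ a :: Δ →
    ∃ Ps₁ P₁ P₂ Ps₂, Ps = Ps₁ ++ (P₁ ++ a :: P₂) :: Ps₂ ∧
      Γ = Ps₁.flatten ++ P₁ ∧ Δ = P₂ ++ Ps₂.flatten := by
  intro Ps
  induction Ps with
  | nil =>
    intro Γ Δ a h
    exact absurd h.symm (by simp)
  | cons P Ps ih =>
    intro Γ Δ a h
    rcases cons_split (m₁ := P) (m₂ := Ps.flatten) h.symm with ⟨t, h1, h2⟩ | ⟨t, h1, h2⟩
    · exact ⟨[], Γ, t, Ps, by simp [h1], by simp, by simp [h2]⟩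
    · obtain ⟨Ps₁, P₁, P₂, Ps₂, rfl, rfl, rfl⟩ := ih h1
      exact ⟨P :: Ps₁, P₁, P₂, Ps₂, by simp, by simp [h2], rfl⟩

theorem leftRed_ldiv {A₁ B₁ : LFormula} (c₁ : CutF A₁) (c₂ : CutF B₁) :
    ∀ {T X}, LDer T X → X = .ldiv A₁ B₁ →
      ∀ P Γ Δ C, LDer P A₁ → LDer (Γ ++ B₁ :: Δ) C →
        LDer (Γ ++ (P ++ T) ++ Δ) C := by
  intro T X d
  induction d with
  | id A =>
    rintro rfl P Γ Δ C hP hBC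
    simpa [List.append_assoc] using LDer.ldiv_left P Γ Δ A₁ B₁ C hP (by simpa using hBC)
  | ldiv_left P' Γ' Δ' A' B' C' d1 d2 ih1 ih2 =>
    rintro rfl P Γ Δ C hP hBC
    have h2 := ih2 rfl P Γ Δ C hP hBC
    have := LDer.ldiv_left P' (Γ ++ P ++ Γ') (Δ' ++ Δ) A' B' C d1
      (by simpa [List.append_assoc] using h2)
    simpa [List.append_assoc] using this
  | rdiv_left P' Γ' Δ' A' B' C' d1 d2 ih1 ih2 =>
    rintro rfl P Γ Δ C hP hBC
    have h2 := ih2 rfl P Γ Δ C hP hBC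
    have := LDer.rdiv_left P' (Γ ++ P ++ Γ') (Δ' ++ Δ) A' B' C d1
      (by simpa [List.append_assoc] using h2)
    simpa [List.append_assoc] using this
  | mul_left Γ' Δ' A' B' C' d1 ih1 =>
    rintro rfl P Γ Δ C hP hBC
    have h2 := ih1 rfl P Γ Δ C hP hBC
    have := LDer.mul_left (Γ ++ P ++ Γ') (Δ' ++ Δ) A' B' C
      (by simpa [List.append_assoc] using h2)
    simpa [List.append_assoc] using this
  | star_left Γ' Δ' A' C' d1 ih1 =>
    rintro rfl P Γ Δ C hP hBC
    have := LDer.star_left (Γ ++ P ++ Γ') (Δ' ++ Δ) A' C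
      (fun n => by simpa [List.append_assoc] using ih1 n rfl P Γ Δ C hP hBC)
    simpa [List.append_assoc] using this
  | ldiv_right P' A' B' d1 ih1 =>
    intro hX P Γ Δ C hP hBC
    obtain ⟨rfl, rfl⟩ : A' = A₁ ∧ B' = B₁ := by
      injection hX with h1 h2; exact ⟨h1, h2⟩
    have h1 : LDer (P ++ P') B' := by
      simpa using c₁ P [] P' B' hP (by simpa using d1)
    have := c₂ (P ++ P') Γ Δ C h1 hBC
    simpa [List.append_assoc] using this
  | rdiv_right P' A' B' d1 ih1 => intro hX; simp at hX
  | mul_right Γ' Δ' A' B' d1 d2 ih1 ih2 => intro hX; simp at hX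
  | star_right Ps A' h ih => intro hX; simp at hX

theorem leftRed_rdiv {A₁ B₁ : LFormula} (c₁ : CutF A₁) (c₂ : CutF B₁) :
    ∀ {T X}, LDer T X → X = .rdiv B₁ A₁ →
      ∀ P Γ Δ C, LDer P A₁ → LDer (Γ ++ B₁ :: Δ) C →
        LDer (Γ ++ (T ++ P) ++ Δ) C := by
  intro T X d
  induction d with
  | id A =>
    rintro rfl P Γ Δ C hP hBC
    simpa [List.append_assoc] using LDer.rdiv_left P Γ Δ A₁ B₁ C hP (by simpa using hBC)
  | ldiv_left P' Γ' Δ' A' B' C' d1 d2 ih1 ih2 =>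
    rintro rfl P Γ Δ C hP hBC
    have h2 := ih2 rfl P Γ Δ C hP hBC
    have := LDer.ldiv_left P' (Γ ++ Γ') (Δ' ++ P ++ Δ) A' B' C d1
      (by simpa [List.append_assoc] using h2)
    simpa [List.append_assoc] using this
  | rdiv_left P' Γ' Δ' A' B' C' d1 d2 ih1 ih2 =>
    rintro rfl P Γ Δ C hP hBC
    have h2 := ih2 rfl P Γ Δ C hP hBC
    have := LDer.rdiv_left P' (Γ ++ Γ') (Δ' ++ P ++ Δ) A' B' C d1
      (by simpa [List.append_assoc] using h2)
    simpa [List.append_assoc] using this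
  | mul_left Γ' Δ' A' B' C' d1 ih1 =>
    rintro rfl P Γ Δ C hP hBC
    have h2 := ih1 rfl P Γ Δ C hP hBC
    have := LDer.mul_left (Γ ++ Γ') (Δ' ++ P ++ Δ) A' B' C
      (by simpa [List.append_assoc] using h2)
    simpa [List.append_assoc] using this
  | star_left Γ' Δ' A' C' d1 ih1 =>
    rintro rfl P Γ Δ C hP hBC
    have := LDer.star_left (Γ ++ Γ') (Δ' ++ P ++ Δ) A' C
      (fun n => by simpa [List.append_assoc] using ih1 n rfl P Γ Δ C hP hBC)
    simpa [List.append_assoc] using this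
  | rdiv_right P' A' B' d1 ih1 =>
    intro hX P Γ Δ C hP hBC
    obtain ⟨rfl, rfl⟩ : B' = B₁ ∧ A' = A₁ := by
      injection hX with h1 h2; exact ⟨h1, h2⟩
    have h1 : LDer (P' ++ P) B' := by
      simpa using c₁ P P' [] B' hP (by simpa using d1)
    have := c₂ (P' ++ P) Γ Δ C h1 hBC
    simpa [List.append_assoc] using this
  | ldiv_right P' A' B' d1 ih1 => intro hX; simp at hX
  | mul_right Γ' Δ' A' B' d1 d2 ih1 ih2 => intro hX; simp at hX
  | star_right Ps A' h ih => intro hX; simp at hX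

theorem leftRed_mul {A₁ B₁ : LFormula} (c₁ : CutF A₁) (c₂ : CutF B₁) :
    ∀ {T X}, LDer T X → X = .mul A₁ B₁ →
      ∀ Γ Δ C, LDer (Γ ++ A₁ :: B₁ :: Δ) C → LDer (Γ ++ T ++ Δ) C := by
  intro T X d
  induction d with
  | id A =>
    rintro rfl Γ Δ C h
    simpa using LDer.mul_left Γ Δ A₁ B₁ C (by simpa using h)
  | ldiv_left P' Γ' Δ' A' B' C' d1 d2 ih1 ih2 =>
    rintro rfl Γ Δ C h
    have h2 := ih2 rfl Γ Δ C h
    have := LDer.ldiv_left P' (Γ ++ Γ') (Δ' ++ Δ) A' B' C d1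
      (by simpa [List.append_assoc] using h2)
    simpa [List.append_assoc] using this
  | rdiv_left P' Γ' Δ' A' B' C' d1 d2 ih1 ih2 =>
    rintro rfl Γ Δ C h
    have h2 := ih2 rfl Γ Δ C h
    have := LDer.rdiv_left P' (Γ ++ Γ') (Δ' ++ Δ) A' B' C d1
      (by simpa [List.append_assoc] using h2)
    simpa [List.append_assoc] using this
  | mul_left Γ' Δ' A' B' C' d1 ih1 =>
    rintro rfl Γ Δ C h
    have h2 := ih1 rfl Γ Δ C h
    have := LDer.mul_left (Γ ++ Γ') (Δ' ++ Δ) A' B' C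
      (by simpa [List.append_assoc] using h2)
    simpa [List.append_assoc] using this
  | star_left Γ' Δ' A' C' d1 ih1 =>
    rintro rfl Γ Δ C h
    have := LDer.star_left (Γ ++ Γ') (Δ' ++ Δ) A' C
      (fun n => by simpa [List.append_assoc] using ih1 n rfl Γ Δ C h)
    simpa [List.append_assoc] using this
  | mul_right Γ' Δ' A' B' d1 d2 ih1 ih2 =>
    intro hX Γ Δ C h
    obtain ⟨rfl, rfl⟩ : A' = A₁ ∧ B' = B₁ := by
      injection hX with h1 h2; exact ⟨h1, h2⟩
    have h1 := c₁ Γ' Γ (B' :: Δ) C d1 h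
    have h2 := c₂ Δ' (Γ ++ Γ') Δ C d2 (by simpa [List.append_assoc] using h1)
    simpa [List.append_assoc] using h2
  | ldiv_right P' A' B' d1 ih1 => intro hX; simp at hX
  | rdiv_right P' A' B' d1 ih1 => intro hX; simp at hX
  | star_right Ps A' h ih => intro hX; simp at hX

theorem cut_many {A₁ : LFormula} (c₁ : CutF A₁) :
    ∀ (Ps : List (List LFormula)), (∀ P ∈ Ps, LDer P A₁) →
    ∀ Γ Δ C, LDer (Γ ++ List.replicate Ps.length A₁ ++ Δ) C →
      LDer (Γ ++ Ps.flatten ++ Δ) C := by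
  intro Ps
  induction Ps with
  | nil => intro _ Γ Δ C h; simpa using h
  | cons P Ps ih =>
    intro h Γ Δ C hd
    have h1 := c₁ P Γ (List.replicate Ps.length A₁ ++ Δ) C (h P (by simp))
      (by simpa [List.append_assoc, List.replicate_succ] using hd)
    have h2 := ih (fun Q hQ => h Q (by simp [hQ])) (Γ ++ P) Δ C
      (by simpa [List.append_assoc] using h1)
    simpa [List.append_assoc] using h2

theorem leftRed_star {A₁ : LFormula} (c₁ : CutF A₁) :
    ∀ {T X}, LDer T X → X = .star A₁ →
      ∀ Γ Δ C, (∀ n, LDer (Γ ++ List.replicate n A₁ ++ Δ) C) → LDer (Γ ++ T ++ Δ) C := by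
  intro T X d
  induction d with
  | id A =>
    rintro rfl Γ Δ C h
    simpa using LDer.star_left Γ Δ A₁ C h
  | ldiv_left P' Γ' Δ' A' B' C' d1 d2 ih1 ih2 =>
    rintro rfl Γ Δ C h
    have h2 := ih2 rfl Γ Δ C h
    have := LDer.ldiv_left P' (Γ ++ Γ') (Δ' ++ Δ) A' B' C d1
      (by simpa [List.append_assoc] using h2)
    simpa [List.append_assoc] using this
  | rdiv_left P' Γ' Δ' A' B' C' d1 d2 ih1 ih2 =>
    rintro rfl Γ Δ C h
    have h2 := ih2 rfl Γ Δ C h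
    have := LDer.rdiv_left P' (Γ ++ Γ') (Δ' ++ Δ) A' B' C d1
      (by simpa [List.append_assoc] using h2)
    simpa [List.append_assoc] using this
  | mul_left Γ' Δ' A' B' C' d1 ih1 =>
    rintro rfl Γ Δ C h
    have h2 := ih1 rfl Γ Δ C h
    have := LDer.mul_left (Γ ++ Γ') (Δ' ++ Δ) A' B' C
      (by simpa [List.append_assoc] using h2)
    simpa [List.append_assoc] using this
  | star_left Γ' Δ' A' C' d1 ih1 =>
    rintro rfl Γ Δ C h
    have := LDer.star_left (Γ ++ Γ') (Δ' ++ Δ) A' C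
      (fun n => by simpa [List.append_assoc] using ih1 n rfl Γ Δ C h)
    simpa [List.append_assoc] using this
  | star_right Ps A' hPs ihPs =>
    intro hX Γ Δ C h
    obtain rfl : A' = A₁ := by injection hX
    exact cut_many c₁ Ps hPs Γ Δ C (h Ps.length)
  | ldiv_right P' A' B' d1 ih1 => intro hX; simp at hX
  | rdiv_right P' A' B' d1 ih1 => intro hX; simp at hX
  | mul_right Γ' Δ' A' B' d1 d2 ih1 ih2 => intro hX; simp at hX

theorem rightStep (A : LFormula) (ihf : ∀ A', sz A' < sz A → CutF A') : CutF A := by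
  intro T Γ Δ C d e
  have key : ∀ Θ C, LDer Θ C → ∀ Γ Δ, Θ = Γ ++ A :: Δ → LDer (Γ ++ T ++ Δ) C := by
    intro Θ C e
    induction e with
    | id A0 =>
      intro Γ Δ h
      cases Γ with
      | nil =>
        injection h with h1 h2
        subst h1; subst h2
        simpa using d
      | cons b Γ' =>
        injection h with h1 h2
        exact absurd h2.symm (by simp)
    | ldiv_left P' Γ₀ Δ₀ A' B' C' d1 d2 ih1 ih2 =>
      intro Γ Δ h
      have h' : Γ ++ A :: Δ = (Γ₀ ++ P') ++ (LFormula.ldiv A' B' :: Δ₀) := by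
        rw [← h]; simp [List.append_assoc]
      rcases cons_split h' with ⟨t, h1, h2⟩ | ⟨t, h1, h2⟩
      · rcases cons_split h1.symm with ⟨s, g1, g2⟩ | ⟨s, g1, g2⟩
        · have hh := ih2 Γ (s ++ B' :: Δ₀) (by rw [g1]; simp)
          have := LDer.ldiv_left P' (Γ ++ T ++ s) Δ₀ A' B' C' d1
            (by simpa [List.append_assoc] using hh)
          subst h2; subst g2
          simpa [List.append_assoc] using this
        · have hh := ih1 s t g1
          have := LDer.ldiv_left (s ++ T ++ t) Γ₀ Δ₀ A' B' C' hh d2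
          subst h2; subst g2
          simpa [List.append_assoc] using this
      · cases t with
        | nil =>
          injection h1 with hA hΔ
          subst hA; subst hΔ
          have c₁ := ihf A' (by simp [sz])
          have c₂ := ihf B' (by simp [sz])
          have := leftRed_ldiv c₁ c₂ d rfl P' Γ₀ Δ₀ C' d1 (by simpa using d2)
          subst h2
          simpa [List.append_assoc] using this
        | cons X t' =>
          injection h1 with hX h3
          subst hX
          have hh := ih2 (Γ₀ ++ B' :: t') Δ (by rw [h3]; simp)
          have := LDer.ldiv_left P' Γ₀ (t' ++ T ++ Δ) A' B' C' d1
            (by simpa [List.append_assoc] using hh)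
          subst h2
          simpa [List.append_assoc] using this
    | rdiv_left P' Γ₀ Δ₀ A' B' C' d1 d2 ih1 ih2 =>
      intro Γ Δ h
      have h' : Γ ++ A :: Δ = Γ₀ ++ (LFormula.rdiv B' A' :: (P' ++ Δ₀)) := by
        rw [← h]; simp [List.append_assoc]
      rcases cons_split h' with ⟨t, h1, h2⟩ | ⟨t, h1, h2⟩
      · have hh := ih2 Γ (t ++ B' :: Δ₀) (by rw [h1]; simp)
        have := LDer.rdiv_left P' (Γ ++ T ++ t) Δ₀ A' B' C' d1
          (by simpa [List.append_assoc] using hh)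
        subst h2
        simpa [List.append_assoc] using this
      · cases t with
        | nil =>
          injection h1 with hA hΔ
          subst hA
          have c₁ := ihf A' (by simp [sz])
          have c₂ := ihf B' (by simp [sz])
          have := leftRed_rdiv c₁ c₂ d rfl P' Γ₀ Δ₀ C' d1 (by simpa using d2)
          subst h2
          simpa [List.append_assoc, ← hΔ] using this
        | cons X t' =>
          injection h1 with hX h3
          subst hX
          rcases cons_split h3.symm with ⟨s, g1, g2⟩ | ⟨s, g1, g2⟩
          · have hh := ih1 t' s g1
            have := LDer.rdiv_left (t' ++ T ++ s) Γ₀ Δ₀ A' B' C' hh d2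
            subst h2; subst g2
            simpa [List.append_assoc] using this
          · have hh := ih2 (Γ₀ ++ B' :: s) Δ (by rw [g1]; simp)
            have := LDer.rdiv_left P' Γ₀ (s ++ T ++ Δ) A' B' C' d1
              (by simpa [List.append_assoc] using hh)
            subst h2; subst g2
            simpa [List.append_assoc] using this
    | mul_left Γ₀ Δ₀ A' B' C' d1 ih1 =>
      intro Γ Δ h
      have h' : Γ ++ A :: Δ = Γ₀ ++ (LFormula.mul A' B' :: Δ₀) := by
        rw [← h]; simp [List.append_assoc]
      rcases cons_split h' with ⟨t, h1, h2⟩ | ⟨t, h1, h2⟩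
      · have hh := ih1 Γ (t ++ A' :: B' :: Δ₀) (by rw [h1]; simp)
        have := LDer.mul_left (Γ ++ T ++ t) Δ₀ A' B' C'
          (by simpa [List.append_assoc] using hh)
        subst h2
        simpa [List.append_assoc] using this
      · cases t with
        | nil =>
          injection h1 with hA hΔ
          subst hA
          have c₁ := ihf A' (by simp [sz])
          have c₂ := ihf B' (by simp [sz])
          have := leftRed_mul c₁ c₂ d rfl Γ₀ Δ₀ C' (by simpa using d1)
          subst h2
          simpa [List.append_assoc, ← hΔ] using this
        | cons X t' =>
          injection h1 with hX h3
          subst hX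
          have hh := ih1 (Γ₀ ++ A' :: B' :: t') Δ (by rw [h3]; simp)
          have := LDer.mul_left Γ₀ (t' ++ T ++ Δ) A' B' C'
            (by simpa [List.append_assoc] using hh)
          subst h2
          simpa [List.append_assoc] using this
    | star_left Γ₀ Δ₀ A' C' d1 ih1 =>
      intro Γ Δ h
      have h' : Γ ++ A :: Δ = Γ₀ ++ (LFormula.star A' :: Δ₀) := by
        rw [← h]; simp [List.append_assoc]
      rcases cons_split h' with ⟨t, h1, h2⟩ | ⟨t, h1, h2⟩
      · have := LDer.star_left (Γ ++ T ++ t) Δ₀ A' C' (fun n => by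
          simpa [List.append_assoc] using ih1 n Γ (t ++ List.replicate n A' ++ Δ₀)
            (by rw [h1]; simp))
        subst h2
        simpa [List.append_assoc] using this
      · cases t with
        | nil =>
          injection h1 with hA hΔ
          subst hA
          have c₁ := ihf A' (by simp [sz])
          have := leftRed_star c₁ d rfl Γ₀ Δ₀ C' d1
          subst h2
          simpa [List.append_assoc, ← hΔ] using this
        | cons X t' =>
          injection h1 with hX h3
          subst hX
          have := LDer.star_left Γ₀ (t' ++ T ++ Δ) A' C' (fun n => by
            simpa [List.append_assoc] using ih1 n (Γ₀ ++ List.replicate n A' ++ t') Δ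
              (by rw [h3]; simp))
          subst h2
          simpa [List.append_assoc] using this
    | ldiv_right P0 A' B' d1 ih1 =>
      intro Γ Δ h
      have hh := ih1 (A' :: Γ) Δ (by rw [h]; rfl)
      exact LDer.ldiv_right _ A' B' (by simpa [List.append_assoc] using hh)
    | rdiv_right P0 A' B' d1 ih1 =>
      intro Γ Δ h
      have hh := ih1 Γ (Δ ++ [A']) (by rw [h]; simp)
      exact LDer.rdiv_right _ A' B' (by simpa [List.append_assoc] using hh)
    | mul_right Γ₁ Δ₁ A' B' d1 d2 ih1 ih2 =>
      intro Γ Δ h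
      rcases cons_split h.symm with ⟨t, h1, h2⟩ | ⟨t, h1, h2⟩
      · have hh := ih1 Γ t h1
        have := LDer.mul_right (Γ ++ T ++ t) Δ₁ A' B' hh d2
        subst h2
        simpa [List.append_assoc] using this
      · have hh := ih2 t Δ h1
        have := LDer.mul_right Γ₁ (t ++ T ++ Δ) A' B' d1 hh
        subst h2
        simpa [List.append_assoc] using this
    | star_right Ps A' hPs ih =>
      intro Γ Δ h
      obtain ⟨Ps₁, P₁, P₂, Ps₂, hPs_eq, hΓ, hΔ⟩ := flatten_split Ps h
      have hmem : (P₁ ++ A :: P₂) ∈ Ps := by rw [hPs_eq]; simp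
      have hmid := ih _ hmem P₁ P₂ rfl
      have := LDer.star_right (Ps₁ ++ (P₁ ++ T ++ P₂) :: Ps₂) A' (by
        intro Q hQ
        rcases List.mem_append.mp hQ with hQ1 | hQ2
        · exact hPs Q (by rw [hPs_eq]; simp [hQ1])
        · rcases List.mem_cons.mp hQ2 with rfl | hQ3
          · exact hmid
          · exact hPs Q (by rw [hPs_eq]; simp [hQ3]))
      subst hΓ; subst hΔ
      simpa [List.append_assoc] using this
  exact key _ _ e Γ Δ rfl

theorem cutF_all : ∀ n A, sz A ≤ n → CutF A := by
  intro n
  induction n with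
  | zero => intro A h; cases A <;> simp [sz] at h
  | succ n ih =>
    intro A hA
    exact rightStep A (fun A' h' => ih A' (by omega))

theorem cut (A : LFormula) : CutF A := cutF_all (sz A) A le_rfl

end LCut

namespace LCut

lemma prod_map_append {σ : Type} (w : ℕ → Language σ) (l₁ l₂ : List LFormula) :
    ((l₁ ++ l₂).map (LEval w)).prod = (l₁.map (LEval w)).prod * (l₂.map (LEval w)).prod := by
  simp

lemma mem_prod_append {σ : Type} {w : ℕ → Language σ} {l₁ l₂ : List LFormula} {u : List σ} :
    u ∈ ((l₁ ++ l₂).map (LEval w)).prod ↔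
      ∃ a ∈ (l₁.map (LEval w)).prod, ∃ b ∈ (l₂.map (LEval w)).prod, a ++ b = u := by
  rw [prod_map_append]; exact Language.mem_mul

lemma mem_prod_cons {σ : Type} {w : ℕ → Language σ} {A : LFormula} {l : List LFormula}
    {u : List σ} :
    u ∈ ((A :: l).map (LEval w)).prod ↔
      ∃ a ∈ LEval w A, ∃ b ∈ (l.map (LEval w)).prod, a ++ b = u := by
  rw [List.map_cons, List.prod_cons]; exact Language.mem_mul

lemma flatten_mem_prod {σ : Type} {w : ℕ → Language σ} {A : LFormula} :
    ∀ (L : List (List σ)), (∀ y ∈ L, y ∈ LEval w A) →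
      L.flatten ∈ ((List.replicate L.length A).map (LEval w)).prod := by
  intro L
  induction L with
  | nil =>
    intro _
    simp only [List.flatten_nil, List.length_nil, List.replicate_zero, List.map_nil,
      List.prod_nil]
    exact (Language.mem_one _).mpr rfl
  | cons y L ih =>
    intro h
    simp only [List.flatten_cons, List.length_cons, List.replicate_succ, List.map_cons,
      List.prod_cons]
    exact Language.mem_mul.mpr ⟨y, h y (by simp), L.flatten,
      ih (fun z hz => h z (by simp [hz])), rfl⟩

lemma prod_flatten_le {σ : Type} {w : ℕ → Language σ} {A : LFormula} :
    ∀ (Ps : List (List LFormula)), (∀ P ∈ Ps, (P.map (LEval w)).prod ≤ LEval w A) →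
      (Ps.flatten.map (LEval w)).prod ≤ KStar.kstar (LEval w A) := by
  intro Ps
  induction Ps with
  | nil => intro _; simpa using one_le_kstar
  | cons P Ps ih =>
    intro h
    rw [List.flatten_cons, prod_map_append]
    calc (P.map (LEval w)).prod * (Ps.flatten.map (LEval w)).prod
        ≤ LEval w A * KStar.kstar (LEval w A) :=
          mul_le_mul' (h P (by simp)) (ih (fun Q hQ => h Q (by simp [hQ])))
      _ ≤ KStar.kstar (LEval w A) := mul_kstar_le_kstar

theorem soundness {Γ : List LFormula} {B : LFormula} (h : LDer Γ B) (σ : Type)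
    (w : ℕ → Language σ) : (Γ.map (LEval w)).prod ≤ LEval w B := by
  induction h with
  | id A => simp
  | ldiv_left P Γ Δ A B C d1 d2 ih1 ih2 =>
    intro u hu
    rcases mem_prod_append.mp hu with ⟨x, hx, d4, hd4, rfl⟩
    rcases mem_prod_append.mp hx with ⟨y, hy, d3, hd3, rfl⟩
    rcases mem_prod_append.mp hy with ⟨g, hg, p, hp, rfl⟩
    have hd3' : d3 ∈ LEval w (LFormula.ldiv A B) := by simpa using hd3
    simp only [LEval, Set.mem_setOf_eq] at hd3'
    have hpB : p ++ d3 ∈ LEval w B := hd3' p (ih1 hp)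
    apply ih2
    exact mem_prod_append.mpr ⟨g ++ (p ++ d3),
      mem_prod_append.mpr ⟨g, hg, p ++ d3, by simpa using hpB, rfl⟩, d4, hd4, by simp⟩
  | ldiv_right P A B d1 ih =>
    intro u hu
    simp only [LEval, Set.mem_setOf_eq]
    intro x hx
    exact ih (mem_prod_cons.mpr ⟨x, hx, u, hu, rfl⟩)
  | rdiv_left P Γ Δ A B C d1 d2 ih1 ih2 =>
    intro u hu
    rcases mem_prod_append.mp hu with ⟨x, hx, d4, hd4, rfl⟩
    rcases mem_prod_append.mp hx with ⟨y, hy, p, hp, rfl⟩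
    rcases mem_prod_append.mp hy with ⟨g, hg, d3, hd3, rfl⟩
    have hd3' : d3 ∈ LEval w (LFormula.rdiv B A) := by simpa using hd3
    simp only [LEval, Set.mem_setOf_eq] at hd3'
    have hpB : d3 ++ p ∈ LEval w B := hd3' p (ih1 hp)
    apply ih2
    exact mem_prod_append.mpr ⟨g ++ (d3 ++ p),
      mem_prod_append.mpr ⟨g, hg, d3 ++ p, by simpa using hpB, rfl⟩, d4, hd4, by simp⟩
  | rdiv_right P A B d1 ih =>
    intro u hu
    simp only [LEval, Set.mem_setOf_eq]
    intro x hx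
    exact ih (mem_prod_append.mpr ⟨u, hu, x, by simpa using hx, rfl⟩)
  | mul_left Γ Δ A B C d1 ih =>
    intro u hu
    rcases mem_prod_append.mp hu with ⟨x, hx, dd, hdd, rfl⟩
    rcases mem_prod_append.mp hx with ⟨g, hg, m, hm, rfl⟩
    have hm' : m ∈ LEval w (LFormula.mul A B) := by simpa using hm
    simp only [LEval] at hm'
    rcases Language.mem_mul.mp hm' with ⟨a, ha, b, hb, rfl⟩
    apply ih
    have hab : a ++ b ∈ ([A, B].map (LEval w)).prod := by
      have : a ++ b ∈ LEval w A * LEval w B := Language.mem_mul.mpr ⟨a, ha, b, hb, rfl⟩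
      simpa using this
    exact mem_prod_append.mpr ⟨g ++ (a ++ b),
      mem_prod_append.mpr ⟨g, hg, a ++ b, hab, rfl⟩, dd, hdd, by simp⟩
  | mul_right Γ Δ A B d1 d2 ih1 ih2 =>
    intro u hu
    rcases mem_prod_append.mp hu with ⟨a, ha, b, hb, rfl⟩
    simp only [LEval]
    exact Language.mem_mul.mpr ⟨a, ih1 ha, b, ih2 hb, rfl⟩
  | star_left Γ Δ A C d1 ih =>
    intro u hu
    rcases mem_prod_append.mp hu with ⟨x, hx, dd, hdd, rfl⟩
    rcases mem_prod_append.mp hx with ⟨g, hg, s, hs, rfl⟩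
    have hs' : s ∈ LEval w (LFormula.star A) := by simpa using hs
    simp only [LEval] at hs'
    rcases Language.mem_kstar.mp hs' with ⟨L, rfl, hL⟩
    apply ih L.length
    exact mem_prod_append.mpr ⟨g ++ L.flatten,
      mem_prod_append.mpr ⟨g, hg, L.flatten, flatten_mem_prod L hL, rfl⟩, dd, hdd, by simp⟩
  | star_right Ps A hPs ih =>
    simp only [LEval]
    exact prod_flatten_le Ps ih

/-- the canonical valuation -/
def cw : ℕ → Language LFormula := fun n => {Γ | LDer Γ (LFormula.var n)}

lemma pf_eval : ∀ C : LFormula, ProdFree C → LEval cw C = {Γ | LDer Γ C} := by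
  intro C
  induction C with
  | var n => intro _; rfl
  | ldiv A B ihA ihB =>
    intro h
    obtain ⟨hA, hB⟩ := h
    ext Γ
    simp only [LEval, Set.mem_setOf_eq, ihA hA, ihB hB]
    constructor
    · intro H
      exact LDer.ldiv_right Γ A B (H [A] (LDer.id A))
    · intro H x hx
      have h1 : LDer (x ++ LFormula.ldiv A B :: []) B := by
        simpa using LDer.ldiv_left x [] [] A B B hx (LDer.id B)
      show LDer (x ++ Γ) B; simpa using cut (LFormula.ldiv A B) Γ x [] B H h1
  | rdiv B A ihB ihA =>
    intro h
    obtain ⟨hB, hA⟩ := h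
    ext Γ
    simp only [LEval, Set.mem_setOf_eq, ihA hA, ihB hB]
    constructor
    · intro H
      exact LDer.rdiv_right Γ A B (H [A] (LDer.id A))
    · intro H x hx
      have h1 : LDer (([] : List LFormula) ++ LFormula.rdiv B A :: x) B := by
        simpa using LDer.rdiv_left x [] [] A B B hx (LDer.id B)
      show LDer (Γ ++ x) B; simpa using cut (LFormula.rdiv B A) Γ [] x B H h1
  | mul A B ihA ihB => intro h; exact h.elim
  | star A ihA => intro h; exact h.elim

lemma self_mem_prod : ∀ Γ : List LFormula, (∀ A ∈ Γ, ProdFree A) →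
    Γ ∈ (Γ.map (LEval cw)).prod := by
  intro Γ
  induction Γ with
  | nil => intro _; exact (Language.mem_one _).mpr rfl
  | cons A Γ ih =>
    intro h
    have hA : [A] ∈ LEval cw A := by
      rw [pf_eval A (h A (by simp))]; exact LDer.id A
    exact mem_prod_cons.mpr ⟨[A], hA, Γ, ih (fun B hB => h B (by simp [hB])), rfl⟩

def ht : LFormula → ℕ
  | .var _ => 0
  | .ldiv _ _ => 0
  | .rdiv _ _ => 0
  | .mul A B => max (ht A) (ht B) + 1
  | .star A => ht A + 1

lemma pf_ht {A : LFormula} (h : ProdFree A) : ht A = 0 := by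
  cases A <;> first | rfl | exact h.elim

lemma starext_ht_zero {A : LFormula} (h1 : StarExt A) (h2 : ht A = 0) : ProdFree A := by
  cases h1 with
  | pf h => exact h
  | mul _ _ => simp [ht] at h2
  | star _ => simp [ht] at h2

lemma complete_aux : ∀ k m (Γ : List LFormula), (∀ A ∈ Γ, StarExt A) →
    (∀ A ∈ Γ, ht A ≤ k) → Γ.countP (fun A => decide (ht A = k)) ≤ m →
    ∀ B, ProdFree B → ((Γ.map (LEval cw)).prod ≤ LEval cw B) → LDer Γ B := by
  intro k
  induction k with
  | zero =>
    intro m Γ hse hht _ B hB htrue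
    have hpf : ∀ A ∈ Γ, ProdFree A := fun A hA =>
      starext_ht_zero (hse A hA) (Nat.le_zero.mp (hht A hA))
    have hmem := htrue (self_mem_prod Γ hpf)
    rwa [pf_eval B hB] at hmem
  | succ k ihk =>
    intro m
    induction m with
    | zero =>
      intro Γ hse hht hcount B hB htrue
      refine ihk Γ.length Γ hse ?_ List.countP_le_length B hB htrue
      intro A hA
      have h1 := hht A hA
      have h2 : ht A ≠ k + 1 := by
        intro hEq
        have : 0 < Γ.countP (fun A => decide (ht A = k + 1)) :=
          List.countP_pos_iff.mpr ⟨A, hA, by simp [hEq]⟩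
        omega
      omega
    | succ m ihm =>
      intro Γ hse hht hcount B hB htrue
      by_cases hex : ∃ D ∈ Γ, ht D = k + 1
      · obtain ⟨D, hD, hDh⟩ := hex
        obtain ⟨Φ, Ψ, rfl⟩ := List.append_of_mem hD
        have hDc : (decide (ht D = k + 1)) = true := by simp [hDh]
        rw [List.countP_append, List.countP_cons, hDc, if_pos rfl] at hcount
        cases hse D (by simp) with
        | pf hpf => exact absurd hDh (by simp [pf_ht hpf])
        | @mul A' B' hA' hB' =>
          have hmax : max (ht A') (ht B') + 1 = k + 1 := by simpa [ht] using hDh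
          have hA'h : ht A' ≤ k := by
            have := le_max_left (ht A') (ht B'); omega
          have hB'h : ht B' ≤ k := by
            have := le_max_right (ht A') (ht B'); omega
          have step : LDer (Φ ++ A' :: B' :: Ψ) B := by
            apply ihm
            · intro X hX
              rcases List.mem_append.mp hX with hX | hX
              · exact hse X (by simp [hX])
              · rcases List.mem_cons.mp hX with rfl | hX
                · exact hA'
                · rcases List.mem_cons.mp hX with rfl | hX
                  · exact hB'
                  · exact hse X (by simp [hX])
            · intro X hX
              rcases List.mem_append.mp hX with hX | hX
              · exact hht X (by simp [hX])
              · rcases List.mem_cons.mp hX with rfl | hX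
                · omega
                · rcases List.mem_cons.mp hX with rfl | hX
                  · omega
                  · exact hht X (by simp [hX])
            · rw [List.countP_append, List.countP_cons, List.countP_cons,
                if_neg (by simp; omega), if_neg (by simp; omega)]
              omega
            · exact hB
            · have heq : ((Φ ++ A' :: B' :: Ψ).map (LEval cw)).prod
                  = ((Φ ++ LFormula.mul A' B' :: Ψ).map (LEval cw)).prod := by
                simp [LEval, mul_assoc]
              rw [heq]; exact htrue
          have := LDer.mul_left Φ Ψ A' B' B (by simpa using step)
          simpa using this
        | @star A' hA' =>
          have hA'h : ht A' = k := by
            have : ht A' + 1 = k + 1 := by simpa [ht] using hDh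
            omega
          have step : ∀ n, LDer (Φ ++ List.replicate n A' ++ Ψ) B := by
            intro n
            apply ihm
            · intro X hX
              rcases List.mem_append.mp hX with hX | hX
              · rcases List.mem_append.mp hX with hX | hX
                · exact hse X (by simp [hX])
                · rw [List.eq_of_mem_replicate hX]; exact hA'
              · exact hse X (by simp [hX])
            · intro X hX
              rcases List.mem_append.mp hX with hX | hX
              · rcases List.mem_append.mp hX with hX | hX
                · exact hht X (by simp [hX])
                · rw [List.eq_of_mem_replicate hX]; omega
              · exact hht X (by simp [hX])
            · rw [List.countP_append, List.countP_append]
              have e1 : (List.replicate n A').countP (fun A => decide (ht A = k + 1)) = 0 := by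
                apply List.countP_eq_zero.mpr
                intro X hX
                rw [List.eq_of_mem_replicate hX]
                simp only [decide_eq_true_eq]
                omega
              rw [e1]
              omega
            · exact hB
            · have hpow : ((List.replicate n A').map (LEval cw)).prod
                  ≤ LEval cw (LFormula.star A') := by
                rw [List.map_replicate, List.prod_replicate]
                exact pow_le_kstar
              refine le_trans ?_ htrue
              rw [prod_map_append, prod_map_append]
              have hrhs : ((Φ ++ LFormula.star A' :: Ψ).map (LEval cw)).prod
                  = (Φ.map (LEval cw)).prod
                    * (LEval cw (LFormula.star A') * (Ψ.map (LEval cw)).prod) := by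
                simp
              rw [hrhs, mul_assoc]
              exact mul_le_mul' le_rfl (mul_le_mul' hpow le_rfl)
          have := LDer.star_left Φ Ψ A' B step
          simpa using this
      · refine ihm Γ hse hht ?_ B hB htrue
        have h0 : Γ.countP (fun A => decide (ht A = k + 1)) = 0 := by
          apply List.countP_eq_zero.mpr
          intro A hA
          simpa using fun hEq => hex ⟨A, hA, hEq⟩
        omega

end LCut


/-- Completeness of the *-external fragment of L*ω w.r.t. language models:
a *-external sequent is derivable in L*ω iff it is true in every L-model, i.e.
w(A₁)·…·w(A_n) ⊆ w(B) for every type Σ and every valuation w of the variables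
by languages over Σ (for the empty antecedent: the empty word belongs to w(B)). -/
theorem star_external_Lmodel_completeness (Γ : List LFormula) (B : LFormula)
    (hΓ : ∀ A ∈ Γ, StarExt A) (hB : ProdFree B) :
    LDer Γ B ↔ ∀ (σ : Type) (w : ℕ → Language σ),
      (Γ.map (LEval w)).prod ≤ LEval w B := by
  constructor
  · intro h σ w
    exact LCut.soundness h σ w
  · intro h
    refine LCut.complete_aux ((Γ.map LCut.ht).sum) Γ.length Γ hΓ ?_
      List.countP_le_length B hB (h LFormula LCut.cw)
    intro A hA
    exact List.single_le_sum (by simp) _ (List.mem_map_of_mem hA)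
end

section
/- Completeness for the *-external fragment with respect to relational models: a *-external sequent is derivable in L*ω if and only if it is true in every R-model, i.e., for every type W and every valuation of the variables by binary relations on W. -/
/-- Interpretation of L*ω formulas in a relational model: a valuation `w` of the
variables by binary relations on W extends to all formulas, · being relational
composition, * the union of all finite iterates (i.e. the reflexive–transitive
closure) and the divisions the corresponding residuals. -/
def REval {W : Type} (w : ℕ → W → W → Prop) : LFormula → W → W → Prop
  | LFormula.var n => w n
  | LFormula.ldiv A B => fun y zz => ∀ x, REval w A x y → REval w B x zz
  | LFormula.rdiv B A => fun x y => ∀ zz, REval w A y zz → REval w B x zz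
  | LFormula.mul A B => fun x zz => ∃ y, REval w A x y ∧ REval w B y zz
  | LFormula.star A => Relation.ReflTransGen (REval w A)

/-- Composition of a list of relations (the empty list composing to the identity). -/
def RelListComp {W : Type} : List (W → W → Prop) → W → W → Prop
  | [] => Eq
  | R :: Rs => fun x zz => ∃ y, R x y ∧ RelListComp Rs y zz


section ListSplit
variable {α : Type}

lemma split_two {L₁ L₂ Γ Δ : List α} {D : α}
    (h : L₁ ++ L₂ = Γ ++ [D] ++ Δ) :
    (∃ t, L₁ = Γ ++ [D] ++ t ∧ Δ = t ++ L₂) ∨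
    (∃ t, L₂ = t ++ [D] ++ Δ ∧ Γ = L₁ ++ t) := by
  rw [List.append_assoc] at h
  rcases List.append_eq_append_iff.mp h with ⟨a', ha, hb⟩ | ⟨c', hc, hd⟩
  · exact Or.inr ⟨a', by simp [hb], ha⟩
  · cases c' with
    | nil => exact Or.inr ⟨[], by simpa using hd.symm, by simpa using hc.symm⟩
    | cons x t =>
      obtain ⟨rfl, hΔ⟩ : D = x ∧ Δ = t ++ L₂ := by simpa using hd
      exact Or.inl ⟨t, by simp [hc], hΔ⟩

lemma split_mid {Γ' Δ' Γ Δ : List α} {X D : α}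
    (h : Γ' ++ [X] ++ Δ' = Γ ++ [D] ++ Δ) :
    (∃ t, Γ' = Γ ++ [D] ++ t ∧ Δ = t ++ [X] ++ Δ') ∨
    (Γ' = Γ ∧ X = D ∧ Δ' = Δ) ∨
    (∃ t, Δ' = t ++ [D] ++ Δ ∧ Γ = Γ' ++ [X] ++ t) := by
  rw [List.append_assoc] at h
  rcases split_two h with ⟨t, h1, h2⟩ | ⟨t, h1, h2⟩
  · exact Or.inl ⟨t, h1, by simpa [List.append_assoc] using h2⟩
  · cases t with
    | nil =>
      obtain ⟨rfl, hΔ⟩ : X = D ∧ Δ' = Δ := by simpa using h1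
      exact Or.inr (Or.inl ⟨by simpa using h2.symm, rfl, hΔ⟩)
    | cons y t' =>
      obtain ⟨rfl, hΔ'⟩ : X = y ∧ Δ' = t' ++ [D] ++ Δ := by simpa using h1
      exact Or.inr (Or.inr ⟨t', hΔ', by simpa [List.append_assoc] using h2⟩)

lemma flat_split {D : α} :
    ∀ (Ps : List (List α)) {Γ Δ : List α}, Ps.flatten = Γ ++ [D] ++ Δ →
    ∃ Ps₁ P₁ P₂ Ps₂, Ps = Ps₁ ++ (P₁ ++ [D] ++ P₂) :: Ps₂ ∧
      Γ = Ps₁.flatten ++ P₁ ∧ Δ = P₂ ++ Ps₂.flatten := by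
  intro Ps
  induction Ps with
  | nil =>
    intro Γ Δ h
    exact absurd h.symm (by simp)
  | cons P Ps ih =>
    intro Γ Δ h
    rw [List.flatten_cons] at h
    rcases split_two h with ⟨t, h1, h2⟩ | ⟨t, h1, h2⟩
    · exact ⟨[], Γ, t, Ps, by simp [h1], by simp, by simp [h2]⟩
    · obtain ⟨Ps₁, P₁, P₂, Ps₂, e1, e2, e3⟩ := ih h1
      exact ⟨P :: Ps₁, P₁, P₂, Ps₂, by simp [e1], by simp [h2, e2, List.append_assoc], e3⟩

def CutT (D : LFormula) : Prop :=
  ∀ Φ Γ Δ C, LDer Φ D → LDer (Γ ++ [D] ++ Δ) C → LDer (Γ ++ Φ ++ Δ) C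

lemma prin_ldiv {A B : LFormula} (cutA : CutT A) (cutB : CutT B) :
    ∀ (Φ : List LFormula) (F : LFormula), LDer Φ F → F = LFormula.ldiv A B →
    ∀ P Γ Δ C, LDer P A → LDer (Γ ++ [B] ++ Δ) C → LDer (Γ ++ P ++ Φ ++ Δ) C := by
  intro Φ F d
  induction d with
  | id E =>
    rintro rfl P Γ Δ C dP dB
    exact LDer.ldiv_left P Γ Δ A B C dP dB
  | ldiv_left P₂ Γ₂ Δ₂ A₂ B₂ C₂ d1 d2 ih1 ih2 =>
    rintro rfl P Γ Δ C dP dB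
    have h := ih2 rfl P Γ Δ C dP dB
    have h2 := LDer.ldiv_left P₂ (Γ ++ P ++ Γ₂) (Δ₂ ++ Δ) A₂ B₂ C d1
      (by simpa [List.append_assoc] using h)
    simpa [List.append_assoc] using h2
  | ldiv_right P₀ A₀ B₀ d ih =>
    intro hF P Γ Δ C dP dB
    injection hF with e1 e2
    subst e1; subst e2
    have h1 := cutA P [] P₀ _ dP (by simpa using d)
    have h2 := cutB (P ++ P₀) Γ Δ C (by simpa using h1) dB
    simpa [List.append_assoc] using h2
  | rdiv_left P₂ Γ₂ Δ₂ A₂ B₂ C₂ d1 d2 ih1 ih2 =>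
    rintro rfl P Γ Δ C dP dB
    have h := ih2 rfl P Γ Δ C dP dB
    have h2 := LDer.rdiv_left P₂ (Γ ++ P ++ Γ₂) (Δ₂ ++ Δ) A₂ B₂ C d1
      (by simpa [List.append_assoc] using h)
    simpa [List.append_assoc] using h2
  | rdiv_right P₀ A₀ B₀ d ih => intro hF; exact absurd hF (by simp)
  | mul_left Γ₂ Δ₂ A₂ B₂ C₂ d ih =>
    rintro rfl P Γ Δ C dP dB
    have h := ih rfl P Γ Δ C dP dB
    have h2 := LDer.mul_left (Γ ++ P ++ Γ₂) (Δ₂ ++ Δ) A₂ B₂ C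
      (by simpa [List.append_assoc] using h)
    simpa [List.append_assoc] using h2
  | mul_right Γ₂ Δ₂ A₂ B₂ d1 d2 ih1 ih2 => intro hF; exact absurd hF (by simp)
  | star_left Γ₂ Δ₂ A₂ C₂ d ih =>
    rintro rfl P Γ Δ C dP dB
    have h2 := LDer.star_left (Γ ++ P ++ Γ₂) (Δ₂ ++ Δ) A₂ C (fun n => by
      simpa [List.append_assoc] using ih n rfl P Γ Δ C dP dB)
    simpa [List.append_assoc] using h2
  | star_right Ps A₂ d ih => intro hF; exact absurd hF (by simp)

lemma prin_rdiv {A B : LFormula} (cutA : CutT A) (cutB : CutT B) :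
    ∀ (Φ : List LFormula) (F : LFormula), LDer Φ F → F = LFormula.rdiv B A →
    ∀ P Γ Δ C, LDer P A → LDer (Γ ++ [B] ++ Δ) C → LDer (Γ ++ Φ ++ P ++ Δ) C := by
  intro Φ F d
  induction d with
  | id E =>
    rintro rfl P Γ Δ C dP dB
    have := LDer.rdiv_left P Γ Δ A B C dP dB
    simpa [List.append_assoc] using this
  | ldiv_left P₂ Γ₂ Δ₂ A₂ B₂ C₂ d1 d2 ih1 ih2 =>
    rintro rfl P Γ Δ C dP dB
    have h := ih2 rfl P Γ Δ C dP dB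
    have h2 := LDer.ldiv_left P₂ (Γ ++ Γ₂) (Δ₂ ++ P ++ Δ) A₂ B₂ C d1
      (by simpa [List.append_assoc] using h)
    simpa [List.append_assoc] using h2
  | ldiv_right P₀ A₀ B₀ d ih => intro hF; exact absurd hF (by simp)
  | rdiv_left P₂ Γ₂ Δ₂ A₂ B₂ C₂ d1 d2 ih1 ih2 =>
    rintro rfl P Γ Δ C dP dB
    have h := ih2 rfl P Γ Δ C dP dB
    have h2 := LDer.rdiv_left P₂ (Γ ++ Γ₂) (Δ₂ ++ P ++ Δ) A₂ B₂ C d1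
      (by simpa [List.append_assoc] using h)
    simpa [List.append_assoc] using h2
  | rdiv_right P₀ A₀ B₀ d ih =>
    intro hF P Γ Δ C dP dB
    injection hF with e1 e2
    subst e1; subst e2
    have h1 := cutA P P₀ [] _ dP (by simpa using d)
    have h2 := cutB (P₀ ++ P) Γ Δ C (by simpa using h1) dB
    simpa [List.append_assoc] using h2
  | mul_left Γ₂ Δ₂ A₂ B₂ C₂ d ih =>
    rintro rfl P Γ Δ C dP dB
    have h := ih rfl P Γ Δ C dP dB
    have h2 := LDer.mul_left (Γ ++ Γ₂) (Δ₂ ++ P ++ Δ) A₂ B₂ C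
      (by simpa [List.append_assoc] using h)
    simpa [List.append_assoc] using h2
  | mul_right Γ₂ Δ₂ A₂ B₂ d1 d2 ih1 ih2 => intro hF; exact absurd hF (by simp)
  | star_left Γ₂ Δ₂ A₂ C₂ d ih =>
    rintro rfl P Γ Δ C dP dB
    have h2 := LDer.star_left (Γ ++ Γ₂) (Δ₂ ++ P ++ Δ) A₂ C (fun n => by
      simpa [List.append_assoc] using ih n rfl P Γ Δ C dP dB)
    simpa [List.append_assoc] using h2
  | star_right Ps A₂ d ih => intro hF; exact absurd hF (by simp)

lemma cut_core (D : LFormula) (Φ : List LFormula) (dΦ : LDer Φ D)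
    (hld : ∀ A B, D = LFormula.ldiv A B →
      ∀ P Γ Δ C, LDer P A → LDer (Γ ++ [B] ++ Δ) C → LDer (Γ ++ P ++ Φ ++ Δ) C)
    (hrd : ∀ B A, D = LFormula.rdiv B A →
      ∀ P Γ Δ C, LDer P A → LDer (Γ ++ [B] ++ Δ) C → LDer (Γ ++ Φ ++ P ++ Δ) C)
    (hnm : ∀ A B, D ≠ LFormula.mul A B) (hns : ∀ A, D ≠ LFormula.star A) :
    ∀ S C, LDer S C → ∀ Γ Δ, S = Γ ++ [D] ++ Δ → LDer (Γ ++ Φ ++ Δ) C := by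
  intro S C d
  induction d with
  | id E =>
    intro Γ Δ h
    rcases split_mid (show ([] : List LFormula) ++ [E] ++ [] = Γ ++ [D] ++ Δ by
        simpa using h) with ⟨t, e1, e2⟩ | ⟨e1, e2, e3⟩ | ⟨t, e1, e2⟩
    · exact absurd e1 (by simp)
    · subst e1; subst e3; subst e2
      simpa using dΦ
    · exact absurd e1 (by simp)
  | ldiv_left P Γ₁ Δ₁ A B C dP dB ihP ihB =>
    intro Γ Δ h
    have h' : Γ₁ ++ (P ++ [LFormula.ldiv A B] ++ Δ₁) = Γ ++ [D] ++ Δ := by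
      simpa [List.append_assoc] using h
    rcases split_two h' with ⟨t, e1, e2⟩ | ⟨t, e1, e2⟩
    · have hb := ihB Γ (t ++ [B] ++ Δ₁) (by rw [e1]; simp [List.append_assoc])
      have h2 := LDer.ldiv_left P (Γ ++ Φ ++ t) Δ₁ A B C dP
        (by simpa [List.append_assoc] using hb)
      rw [e2]; simpa [List.append_assoc] using h2
    · have e1' : P ++ ([LFormula.ldiv A B] ++ Δ₁) = t ++ [D] ++ Δ := by
        simpa [List.append_assoc] using e1
      rcases split_two e1' with ⟨s, f1, f2⟩ | ⟨s, f1, f2⟩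
      · have hp := ihP t s f1
        have h2 := LDer.ldiv_left (t ++ Φ ++ s) Γ₁ Δ₁ A B C hp dB
        rw [e2, f2]; simpa [List.append_assoc] using h2
      · cases s with
        | nil =>
          obtain ⟨e3, e4⟩ : LFormula.ldiv A B = D ∧ Δ₁ = Δ := by simpa using f1
          have h2 := hld A B e3.symm P Γ₁ Δ₁ C dP dB
          rw [e2, f2, ← e4]; simpa [List.append_assoc] using h2
        | cons y s' =>
          obtain ⟨e3, e4⟩ : LFormula.ldiv A B = y ∧ Δ₁ = s' ++ [D] ++ Δ := by simpa using f1
          have hb := ihB (Γ₁ ++ [B] ++ s') Δ (by rw [e4]; simp [List.append_assoc])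
          have h2 := LDer.ldiv_left P Γ₁ (s' ++ Φ ++ Δ) A B C dP
            (by simpa [List.append_assoc] using hb)
          rw [e2, f2, ← e3]; simpa [List.append_assoc] using h2
  | ldiv_right P₀ A B d ih =>
    intro Γ Δ h
    have h1 := ih (A :: Γ) Δ (by rw [h]; simp)
    exact LDer.ldiv_right (Γ ++ Φ ++ Δ) A B (by simpa using h1)
  | rdiv_left P Γ₁ Δ₁ A B C dP dB ihP ihB =>
    intro Γ Δ h
    have h' : Γ₁ ++ ([LFormula.rdiv B A] ++ P ++ Δ₁) = Γ ++ [D] ++ Δ := by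
      simpa [List.append_assoc] using h
    rcases split_two h' with ⟨t, e1, e2⟩ | ⟨t, e1, e2⟩
    · have hb := ihB Γ (t ++ [B] ++ Δ₁) (by rw [e1]; simp [List.append_assoc])
      have h2 := LDer.rdiv_left P (Γ ++ Φ ++ t) Δ₁ A B C dP
        (by simpa [List.append_assoc] using hb)
      rw [e2]; simpa [List.append_assoc] using h2
    · cases t with
      | nil =>
        obtain ⟨e3, e4⟩ : LFormula.rdiv B A = D ∧ P ++ Δ₁ = Δ := by simpa using e1
        have h2 := hrd B A e3.symm P Γ₁ Δ₁ C dP dB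
        rw [e2, ← e4]; simpa [List.append_assoc] using h2
      | cons y t' =>
        obtain ⟨e3, e4⟩ : LFormula.rdiv B A = y ∧ P ++ Δ₁ = t' ++ [D] ++ Δ := by simpa using e1
        rcases split_two e4 with ⟨s, f1, f2⟩ | ⟨s, f1, f2⟩
        · have hp := ihP t' s f1
          have h2 := LDer.rdiv_left (t' ++ Φ ++ s) Γ₁ Δ₁ A B C hp dB
          rw [e2, ← e3, f2]; simpa [List.append_assoc] using h2
        · have hb := ihB (Γ₁ ++ [B] ++ s) Δ (by rw [f1]; simp [List.append_assoc])
          have h2 := LDer.rdiv_left P Γ₁ (s ++ Φ ++ Δ) A B C dP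
            (by simpa [List.append_assoc] using hb)
          rw [e2, ← e3, f2]; simpa [List.append_assoc] using h2
  | rdiv_right P₀ A B d ih =>
    intro Γ Δ h
    have h1 := ih Γ (Δ ++ [A]) (by rw [h]; simp [List.append_assoc])
    exact LDer.rdiv_right (Γ ++ Φ ++ Δ) A B (by simpa [List.append_assoc] using h1)
  | mul_left Γ₁ Δ₁ A B C d ih =>
    intro Γ Δ h
    rcases split_mid h with ⟨t, e1, e2⟩ | ⟨e1, e2, e3⟩ | ⟨t, e1, e2⟩
    · have h1 := ih Γ (t ++ [A, B] ++ Δ₁) (by rw [e1]; simp [List.append_assoc])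
      have h2 := LDer.mul_left (Γ ++ Φ ++ t) Δ₁ A B C
        (by simpa [List.append_assoc] using h1)
      rw [e2]; simpa [List.append_assoc] using h2
    · exact absurd e2.symm (hnm A B)
    · have h1 := ih (Γ₁ ++ [A, B] ++ t) Δ (by rw [e1]; simp [List.append_assoc])
      have h2 := LDer.mul_left Γ₁ (t ++ Φ ++ Δ) A B C
        (by simpa [List.append_assoc] using h1)
      rw [e2]; simpa [List.append_assoc] using h2
  | mul_right Γ₁ Δ₁ A B d1 d2 ih1 ih2 =>
    intro Γ Δ h
    rcases split_two h with ⟨t, e1, e2⟩ | ⟨t, e1, e2⟩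
    · have h1 := ih1 Γ t e1
      have h2 := LDer.mul_right (Γ ++ Φ ++ t) Δ₁ A B h1 d2
      rw [e2]; simpa [List.append_assoc] using h2
    · have h1 := ih2 t Δ e1
      have h2 := LDer.mul_right Γ₁ (t ++ Φ ++ Δ) A B d1 h1
      rw [e2]; simpa [List.append_assoc] using h2
  | star_left Γ₁ Δ₁ A C d ih =>
    intro Γ Δ h
    rcases split_mid h with ⟨t, e1, e2⟩ | ⟨e1, e2, e3⟩ | ⟨t, e1, e2⟩
    · have h2 := LDer.star_left (Γ ++ Φ ++ t) Δ₁ A C (fun n => by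
        simpa [List.append_assoc] using
          ih n Γ (t ++ List.replicate n A ++ Δ₁) (by rw [e1]; simp [List.append_assoc]))
      rw [e2]; simpa [List.append_assoc] using h2
    · exact absurd e2.symm (hns A)
    · have h2 := LDer.star_left Γ₁ (t ++ Φ ++ Δ) A C (fun n => by
        simpa [List.append_assoc] using
          ih n (Γ₁ ++ List.replicate n A ++ t) Δ (by rw [e1]; simp [List.append_assoc]))
      rw [e2]; simpa [List.append_assoc] using h2
  | star_right Ps A d ih =>
    intro Γ Δ h
    obtain ⟨Ps₁, P₁, P₂, Ps₂, e1, e2, e3⟩ := flat_split Ps h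
    have hmid : LDer (P₁ ++ Φ ++ P₂) A :=
      ih _ (by rw [e1]; simp) P₁ P₂ rfl
    have hall : ∀ P ∈ Ps₁ ++ (P₁ ++ Φ ++ P₂) :: Ps₂, LDer P A := by
      intro P hP
      rcases List.mem_append.mp hP with hP1 | hP2
      · exact d P (by rw [e1]; simp [hP1])
      · rcases List.mem_cons.mp hP2 with rfl | hP3
        · exact hmid
        · exact d P (by rw [e1]; simp [hP3])
    have h2 := LDer.star_right (Ps₁ ++ (P₁ ++ Φ ++ P₂) :: Ps₂) A hall
    rw [e2, e3]
    simpa [List.flatten_append, List.append_assoc] using h2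

lemma cutPF : ∀ D : LFormula, ProdFree D → CutT D := by
  intro D
  induction D with
  | var n =>
    intro _ Φ Γ Δ C dΦ d
    exact cut_core _ Φ dΦ (fun _ _ h => nomatch h) (fun _ _ h => nomatch h)
      (fun _ _ h => nomatch h) (fun _ h => nomatch h) _ _ d Γ Δ rfl
  | ldiv A B ihA ihB =>
    intro hD Φ Γ Δ C dΦ d
    refine cut_core _ Φ dΦ ?_ (fun _ _ h => nomatch h)
      (fun _ _ h => nomatch h) (fun _ h => nomatch h) _ _ d Γ Δ rfl
    intro A' B' h P Γ' Δ' C' dP dB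
    injection h with h1 h2
    subst h1; subst h2
    exact prin_ldiv (ihA hD.1) (ihB hD.2) Φ _ dΦ rfl P Γ' Δ' C' dP dB
  | rdiv B A ihB ihA =>
    intro hD Φ Γ Δ C dΦ d
    refine cut_core _ Φ dΦ (fun _ _ h => nomatch h) ?_
      (fun _ _ h => nomatch h) (fun _ h => nomatch h) _ _ d Γ Δ rfl
    intro B' A' h P Γ' Δ' C' dP dB
    injection h with h1 h2
    subst h1; subst h2
    exact prin_rdiv (ihA hD.2) (ihB hD.1) Φ _ dΦ rfl P Γ' Δ' C' dP dB
  | mul A B _ _ => intro hD; exact absurd hD (by simp [ProdFree])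
  | star A _ => intro hD; exact absurd hD (by simp [ProdFree])

/-- Truth of a sequent in all R-models. -/
def Sem (Γ : List LFormula) (B : LFormula) : Prop :=
  ∀ (W : Type) (w : ℕ → W → W → Prop) (x zz : W),
    RelListComp (Γ.map (REval w)) x zz → REval w B x zz

section RLC
variable {W : Type}

lemma rlc_nil (x z : W) : RelListComp ([] : List (W → W → Prop)) x z ↔ x = z := Iff.rfl

lemma rlc_cons (R : W → W → Prop) (Rs : List (W → W → Prop)) (x z : W) :
    RelListComp (R :: Rs) x z ↔ ∃ y, R x y ∧ RelListComp Rs y z := Iff.rfl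

lemma rlc_append (Rs Ss : List (W → W → Prop)) (x z : W) :
    RelListComp (Rs ++ Ss) x z ↔ ∃ y, RelListComp Rs x y ∧ RelListComp Ss y z := by
  induction Rs generalizing x with
  | nil =>
    simp only [List.nil_append, rlc_nil]
    constructor
    · intro h; exact ⟨x, rfl, h⟩
    · rintro ⟨y, rfl, h⟩; exact h
  | cons R Rs ih =>
    simp only [List.cons_append, rlc_cons, ih]
    constructor
    · rintro ⟨y, hy, u, hu1, hu2⟩; exact ⟨u, ⟨y, hy, hu1⟩, hu2⟩
    · rintro ⟨u, ⟨y, hy, hu1⟩, hu2⟩; exact ⟨y, hy, u, hu1, hu2⟩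

lemma rlc_single (R : W → W → Prop) (x z : W) :
    RelListComp [R] x z ↔ R x z := by
  constructor
  · rintro ⟨y, hy, rfl⟩; exact hy
  · intro h; exact ⟨z, h, rfl⟩

lemma rtg_of_chain (r : W → W → Prop) :
    ∀ (n : ℕ) (x z : W), RelListComp (List.replicate n r) x z →
      Relation.ReflTransGen r x z := by
  intro n
  induction n with
  | zero => intro x z h; rw [List.replicate_zero, rlc_nil] at h; exact h ▸ Relation.ReflTransGen.refl
  | succ n ih =>
    intro x z h
    rw [List.replicate_succ, rlc_cons] at h
    obtain ⟨y, hxy, hyz⟩ := h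
    exact Relation.ReflTransGen.head hxy (ih y z hyz)

lemma chain_of_rtg (r : W → W → Prop) (x z : W)
    (h : Relation.ReflTransGen r x z) :
    ∃ n, RelListComp (List.replicate n r) x z := by
  induction h with
  | refl => exact ⟨0, rfl⟩
  | tail _ hbc ih =>
    obtain ⟨n, hn⟩ := ih
    refine ⟨n + 1, ?_⟩
    rw [List.replicate_succ', rlc_append]
    exact ⟨_, hn, (rlc_single _ _ _).mpr hbc⟩

end RLC

lemma soundness {Γ : List LFormula} {B : LFormula} (d : LDer Γ B) : Sem Γ B := by
  induction d with
  | id A =>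
    intro W w x z h
    rw [List.map_cons, List.map_nil, rlc_single] at h; exact h
  | ldiv_left P Γ Δ A B C dP dB ihP ihB =>
    intro W w x z h
    simp only [List.map_append, rlc_append] at h
    obtain ⟨y₃, ⟨y₂, ⟨y₁, hΓ, hP⟩, hdiv⟩, hΔ⟩ := h
    rw [List.map_cons, List.map_nil, rlc_single] at hdiv
    have hA : REval w A y₁ y₂ := ihP W w y₁ y₂ hP
    have hB : REval w B y₁ y₃ := hdiv y₁ hA
    refine ihB W w x z ?_
    simp only [List.map_append, rlc_append]
    exact ⟨y₃, ⟨y₁, hΓ, (by rw [List.map_cons, List.map_nil, rlc_single]; exact hB)⟩, hΔ⟩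
  | ldiv_right P A B d ih =>
    intro W w x z h
    intro y hy
    refine ih W w y z ?_
    rw [List.map_cons, rlc_cons]
    exact ⟨x, hy, h⟩
  | rdiv_left P Γ Δ A B C dP dB ihP ihB =>
    intro W w x z h
    simp only [List.map_append, rlc_append] at h
    obtain ⟨y₃, ⟨y₂, ⟨y₁, hΓ, hdiv⟩, hP⟩, hΔ⟩ := h
    rw [List.map_cons, List.map_nil, rlc_single] at hdiv
    have hA : REval w A y₂ y₃ := ihP W w y₂ y₃ hP
    have hB : REval w B y₁ y₃ := hdiv y₃ hA
    refine ihB W w x z ?_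
    simp only [List.map_append, rlc_append]
    exact ⟨y₃, ⟨y₁, hΓ, (by rw [List.map_cons, List.map_nil, rlc_single]; exact hB)⟩, hΔ⟩
  | rdiv_right P A B d ih =>
    intro W w x z h
    intro y hy
    refine ih W w x y ?_
    simp only [List.map_append, rlc_append]
    exact ⟨z, h, (by rw [List.map_cons, List.map_nil, rlc_single]; exact hy)⟩
  | mul_left Γ Δ A B C d ih =>
    intro W w x z h
    simp only [List.map_append, rlc_append] at h
    obtain ⟨y₂, ⟨y₁, hΓ, hm⟩, hΔ⟩ := h
    rw [List.map_cons, List.map_nil, rlc_single] at hm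
    obtain ⟨u, hu1, hu2⟩ := hm
    refine ih W w x z ?_
    simp only [List.map_append, rlc_append]
    refine ⟨y₂, ⟨y₁, hΓ, ?_⟩, hΔ⟩
    rw [List.map_cons, List.map_cons, List.map_nil, rlc_cons]
    exact ⟨u, hu1, (rlc_single _ _ _).mpr hu2⟩
  | mul_right Γ Δ A B d1 d2 ih1 ih2 =>
    intro W w x z h
    simp only [List.map_append, rlc_append] at h
    obtain ⟨y, hΓ, hΔ⟩ := h
    exact ⟨y, ih1 W w x y hΓ, ih2 W w y z hΔ⟩
  | star_left Γ Δ A C d ih =>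
    intro W w x z h
    simp only [List.map_append, rlc_append] at h
    obtain ⟨y₂, ⟨y₁, hΓ, hs⟩, hΔ⟩ := h
    rw [List.map_cons, List.map_nil, rlc_single] at hs
    obtain ⟨n, hn⟩ := chain_of_rtg (REval w A) y₁ y₂ hs
    refine ih n W w x z ?_
    simp only [List.map_append, rlc_append]
    refine ⟨y₂, ⟨y₁, hΓ, ?_⟩, hΔ⟩
    rw [List.map_replicate]
    exact hn
  | star_right Ps A d ih =>
    intro W w x z h
    clear d
    induction Ps generalizing x with
    | nil =>
      rw [List.flatten_nil, List.map_nil, rlc_nil] at h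
      exact h ▸ Relation.ReflTransGen.refl
    | cons P Ps ihPs =>
      rw [List.flatten_cons, List.map_append, rlc_append] at h
      obtain ⟨y, hP, hPs⟩ := h
      have h1 : REval w A x y := ih P (by simp) W w x y hP
      have h2 : Relation.ReflTransGen (REval w A) y z :=
        ihPs (fun Q hQ => ih Q (by simp [hQ])) y hPs
      exact Relation.ReflTransGen.head h1 h2

/-! ### Free-group canonical model machinery -/

def embedW (Γ : List LFormula) : FreeGroup LFormula :=
  FreeGroup.mk (Γ.map (fun A => (A, true)))

lemma reduce_all_same (b : Bool) :
    ∀ L : List (LFormula × Bool), (∀ p ∈ L, p.2 = b) → FreeGroup.reduce L = L := by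
  intro L
  induction L with
  | nil => intro _; rfl
  | cons x L ih =>
    intro h
    have hL := ih (fun p hp => h p (by simp [hp]))
    rw [FreeGroup.reduce.cons, hL]
    cases L with
    | nil => rfl
    | cons y L' =>
      have hx : x.2 = b := h x (by simp)
      have hy : y.2 = b := h y (by simp)
      have hcond : ¬(x.1 = y.1 ∧ x.2 = !y.2) := by
        rintro ⟨-, h2⟩
        rw [hx, hy] at h2
        simp at h2
      simp [hcond]

lemma toWord_embedW (Γ : List LFormula) :
    (embedW Γ).toWord = Γ.map (fun A => (A, true)) := by
  rw [embedW, FreeGroup.toWord_mk, reduce_all_same true]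
  intro p hp
  simp only [List.mem_map] at hp
  obtain ⟨a, _, rfl⟩ := hp
  rfl

lemma embedW_inj : Function.Injective embedW := by
  intro a b h
  have := congrArg FreeGroup.toWord h
  rw [toWord_embedW, toWord_embedW] at this
  exact List.map_injective_iff.mpr (fun x y hxy => by simpa using congrArg Prod.fst hxy) this

lemma embedW_nil : embedW [] = 1 := rfl

lemma embedW_append (Γ Δ : List LFormula) :
    embedW (Γ ++ Δ) = embedW Γ * embedW Δ := by
  rw [embedW, embedW, embedW, FreeGroup.mul_mk, List.map_append]

lemma embedW_cons (A : LFormula) (Γ : List LFormula) :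
    embedW (A :: Γ) = FreeGroup.of A * embedW Γ := by
  show FreeGroup.mk _ = FreeGroup.mk [(A, true)] * FreeGroup.mk _
  rw [FreeGroup.mul_mk]
  rfl

lemma embedW_single (A : LFormula) : embedW [A] = FreeGroup.of A := by
  rw [embedW_cons, embedW_nil, mul_one]

/-- All letters of the reduced word of `u` carry the sign `b`. -/
def AllB (b : Bool) (u : FreeGroup LFormula) : Prop := ∀ p ∈ u.toWord, p.2 = b

lemma map_fst_all_same {b : Bool} :
    ∀ L : List (LFormula × Bool), (∀ p ∈ L, p.2 = b) →
      (L.map Prod.fst).map (fun A => (A, b)) = L := by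
  intro L
  induction L with
  | nil => intro _; rfl
  | cons x L ih =>
    intro h
    have hx : x.2 = b := h x (by simp)
    simp only [List.map_cons]
    rw [ih (fun p hp => h p (by simp [hp]))]
    congr 1
    exact Prod.ext rfl hx.symm

lemma pos_iff (u : FreeGroup LFormula) :
    (∃ Γ, u = embedW Γ) ↔ AllB true u := by
  constructor
  · rintro ⟨Γ, rfl⟩ p hp
    rw [toWord_embedW] at hp
    simp only [List.mem_map] at hp
    obtain ⟨a, _, rfl⟩ := hp
    rfl
  · intro h
    refine ⟨u.toWord.map Prod.fst, ?_⟩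
    conv_lhs => rw [← FreeGroup.mk_toWord (x := u)]
    rw [embedW, map_fst_all_same u.toWord h]

lemma key_core (b : Bool) (A X : LFormula) (u : FreeGroup LFormula) (hAX : A ≠ X)
    (h1 : AllB b (FreeGroup.mk [(A, b)] * u))
    (h2 : AllB b (FreeGroup.mk [(A, b)] * (FreeGroup.mk [(X, b)] * u))) :
    AllB b u := by
  have hu : FreeGroup.reduce u.toWord = u.toWord := FreeGroup.reduce_toWord u
  have e1 : (FreeGroup.mk [(A, b)] * u).toWord = FreeGroup.reduce ((A, b) :: u.toWord) := by
    conv_lhs => rw [← FreeGroup.mk_toWord (x := u)]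
    rw [FreeGroup.mul_mk, FreeGroup.toWord_mk]
    rfl
  have e2 : (FreeGroup.mk [(A, b)] * (FreeGroup.mk [(X, b)] * u)).toWord
      = FreeGroup.reduce ((A, b) :: (X, b) :: u.toWord) := by
    conv_lhs => rw [← FreeGroup.mk_toWord (x := u)]
    rw [FreeGroup.mul_mk, FreeGroup.mul_mk, FreeGroup.toWord_mk]
    rfl
  rcases hw : u.toWord with _ | ⟨hd, tl⟩
  · intro p hp
    rw [hw] at hp
    simp at hp
  · by_cases hc : A = hd.1 ∧ b = !hd.2
    · exfalso
      have r2 : FreeGroup.reduce ((X, b) :: u.toWord) = (X, b) :: hd :: tl := by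
        rw [FreeGroup.reduce.cons, hu, hw]
        have hcond : ¬((X, b).1 = hd.1 ∧ (X, b).2 = !hd.2) := by
          rintro ⟨hh, -⟩
          exact hAX (hc.1.trans hh.symm)
        simp [hcond]
      have r3 : FreeGroup.reduce ((A, b) :: (X, b) :: u.toWord)
          = (A, b) :: (X, b) :: hd :: tl := by
        rw [FreeGroup.reduce.cons, r2]
        have hcond : ¬((A, b).1 = (X, b).1 ∧ (A, b).2 = !(X, b).2) := by
          rintro ⟨-, hb2⟩
          simp at hb2
        simp [hcond]
      have hmem : hd ∈ (FreeGroup.mk [(A, b)] * (FreeGroup.mk [(X, b)] * u)).toWord := by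
        rw [e2, r3]
        simp
      have hbd := h2 hd hmem
      rw [hbd] at hc
      simp at hc
    · have r1 : FreeGroup.reduce ((A, b) :: u.toWord) = (A, b) :: hd :: tl := by
        rw [FreeGroup.reduce.cons, hu, hw]
        simp only []
        rw [if_neg hc]
      intro p hp
      apply h1 p
      rw [e1, r1]
      rw [hw] at hp
      exact List.mem_cons_of_mem _ hp

lemma posL {A X : LFormula} {u : FreeGroup LFormula} (hAX : A ≠ X)
    (h1 : ∃ S, FreeGroup.of A * u = embedW S)
    (h2 : ∃ S, FreeGroup.of A * (FreeGroup.of X * u) = embedW S) :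
    ∃ Γ, u = embedW Γ := by
  apply (pos_iff u).mpr
  exact key_core true A X u hAX ((pos_iff _).mp h1) ((pos_iff _).mp h2)

lemma allB_inv {b : Bool} {u : FreeGroup LFormula} (h : AllB b u) : AllB (!b) u⁻¹ := by
  intro p hp
  rw [FreeGroup.toWord_inv, FreeGroup.invRev] at hp
  simp only [List.mem_reverse, List.mem_map] at hp
  obtain ⟨q, hq, rfl⟩ := hp
  rw [h q hq]

lemma posR {A Y : LFormula} {u : FreeGroup LFormula} (hAY : A ≠ Y)
    (h1 : ∃ S, u * FreeGroup.of A = embedW S)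
    (h2 : ∃ S, u * FreeGroup.of Y * FreeGroup.of A = embedW S) :
    ∃ Γ, u = embedW Γ := by
  have ofinv : ∀ Z : LFormula, (FreeGroup.of Z)⁻¹ = FreeGroup.mk [(Z, false)] := by
    intro Z
    rw [show FreeGroup.of Z = FreeGroup.mk [(Z, true)] from rfl, FreeGroup.inv_mk]
    rfl
  have a1 : AllB (!true) ((u * FreeGroup.of A)⁻¹) := allB_inv ((pos_iff _).mp h1)
  have a2 : AllB (!true) ((u * FreeGroup.of Y * FreeGroup.of A)⁻¹) :=
    allB_inv ((pos_iff _).mp h2)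
  have e1 : (u * FreeGroup.of A)⁻¹ = FreeGroup.mk [(A, false)] * u⁻¹ := by
    rw [mul_inv_rev, ofinv]
  have e2 : (u * FreeGroup.of Y * FreeGroup.of A)⁻¹
      = FreeGroup.mk [(A, false)] * (FreeGroup.mk [(Y, false)] * u⁻¹) := by
    rw [mul_inv_rev, mul_inv_rev, ofinv, ofinv]
  rw [e1] at a1
  rw [e2] at a2
  have hres : AllB false u⁻¹ :=
    key_core false A Y u⁻¹ hAY (by simpa using a1) (by simpa using a2)
  apply (pos_iff u).mpr
  have := allB_inv hres
  simpa using this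

def fsize : LFormula → ℕ
  | .var _ => 1
  | .ldiv a b => fsize a + fsize b + 1
  | .rdiv a b => fsize a + fsize b + 1
  | .mul a b => fsize a + fsize b + 1
  | .star a => fsize a + 1

lemma ne_ldiv_self (A : LFormula) : A ≠ LFormula.ldiv A A := by
  intro h
  have := congrArg fsize h
  simp [fsize] at this
  omega

lemma ne_rdiv_self (A : LFormula) : A ≠ LFormula.rdiv A A := by
  intro h
  have := congrArg fsize h
  simp [fsize] at this
  omega

lemma der_AX (A : LFormula) : LDer [A, LFormula.ldiv A A] A := by
  have := LDer.ldiv_left [A] [] [] A A A (LDer.id A) (by simpa using LDer.id A)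
  simpa using this

lemma der_YA (A : LFormula) : LDer [LFormula.rdiv A A, A] A := by
  have := LDer.rdiv_left [A] [] [] A A A (LDer.id A) (by simpa using LDer.id A)
  simpa using this

/-- The canonical valuation on the free group over formulas. -/
def cw : ℕ → FreeGroup LFormula → FreeGroup LFormula → Prop :=
  fun n g h => ∃ Δ, LDer Δ (LFormula.var n) ∧ h = g * embedW Δ

lemma truth : ∀ A : LFormula, ProdFree A → ∀ g h : FreeGroup LFormula,
    REval cw A g h ↔ ∃ Δ, LDer Δ A ∧ h = g * embedW Δ := by
  intro A
  induction A with
  | var n => intro _ g h; exact Iff.rfl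
  | ldiv A B ihA ihB =>
    intro hpf g h
    have pfA : ProdFree A := hpf.1
    have pfB : ProdFree B := hpf.2
    constructor
    · intro H
      have e1 : REval cw A (g * (FreeGroup.of A)⁻¹) g := by
        refine (ihA pfA _ _).mpr ⟨[A], LDer.id A, ?_⟩
        rw [embedW_single]; group
      have e2 : REval cw A (g * (FreeGroup.of A * FreeGroup.of (LFormula.ldiv A A))⁻¹) g := by
        refine (ihA pfA _ _).mpr ⟨[A, LFormula.ldiv A A], der_AX A, ?_⟩
        rw [embedW_cons, embedW_single]; group
      obtain ⟨S₁, dS₁, hS₁⟩ := (ihB pfB _ _).mp (H _ e1)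
      obtain ⟨S₂, dS₂, hS₂⟩ := (ihB pfB _ _).mp (H _ e2)
      have q1 : FreeGroup.of A * (g⁻¹ * h) = embedW S₁ := by
        rw [hS₁]; group
      have q2 : FreeGroup.of A * (FreeGroup.of (LFormula.ldiv A A) * (g⁻¹ * h)) = embedW S₂ := by
        rw [hS₂]; group
      obtain ⟨Γ, hΓ⟩ := posL (ne_ldiv_self A) ⟨S₁, q1⟩ ⟨S₂, q2⟩
      have hS : S₁ = A :: Γ := embedW_inj (by rw [← q1, hΓ, embedW_cons])
      refine ⟨Γ, LDer.ldiv_right Γ A B (hS ▸ dS₁), ?_⟩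
      rw [← hΓ]; group
    · rintro ⟨Δ, dΔ, rfl⟩ x hx
      obtain ⟨P, dP, hP⟩ := (ihA pfA _ _).mp hx
      refine (ihB pfB _ _).mpr ⟨P ++ Δ, ?_, by rw [embedW_append, hP]; group⟩
      have base : LDer (P ++ [LFormula.ldiv A B] ++ []) B := by
        have := LDer.ldiv_left P [] [] A B B dP (by simpa using LDer.id B)
        simpa using this
      have := cutPF _ hpf Δ P [] B dΔ base
      simpa using this
  | rdiv B A ihB ihA =>
    intro hpf g h
    have pfB : ProdFree B := hpf.1
    have pfA : ProdFree A := hpf.2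
    constructor
    · intro H
      have e1 : REval cw A h (h * FreeGroup.of A) := by
        refine (ihA pfA _ _).mpr ⟨[A], LDer.id A, ?_⟩
        rw [embedW_single]
      have e2 : REval cw A h (h * (FreeGroup.of (LFormula.rdiv A A) * FreeGroup.of A)) := by
        refine (ihA pfA _ _).mpr ⟨[LFormula.rdiv A A, A], der_YA A, ?_⟩
        rw [embedW_cons, embedW_single]
      obtain ⟨S₁, dS₁, hS₁⟩ := (ihB pfB _ _).mp (H _ e1)
      obtain ⟨S₂, dS₂, hS₂⟩ := (ihB pfB _ _).mp (H _ e2)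
      have q1 : (g⁻¹ * h) * FreeGroup.of A = embedW S₁ := by
        rw [mul_assoc, hS₁]; group
      have q2 : (g⁻¹ * h) * FreeGroup.of (LFormula.rdiv A A) * FreeGroup.of A = embedW S₂ := by
        rw [mul_assoc, mul_assoc, hS₂]; group
      obtain ⟨Γ, hΓ⟩ := posR (ne_rdiv_self A) ⟨S₁, q1⟩ ⟨S₂, q2⟩
      have hS : S₁ = Γ ++ [A] := embedW_inj (by rw [← q1, hΓ, embedW_append, embedW_single])
      refine ⟨Γ, LDer.rdiv_right Γ A B (hS ▸ dS₁), by rw [← hΓ]; group⟩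
    · rintro ⟨Δ, dΔ, rfl⟩ z hz
      obtain ⟨P, dP, hP⟩ := (ihA pfA _ _).mp hz
      refine (ihB pfB _ _).mpr ⟨Δ ++ P, ?_, by rw [embedW_append, hP]; group⟩
      have base : LDer ([] ++ [LFormula.rdiv B A] ++ P) B := by
        have := LDer.rdiv_left P [] [] A B B dP (by simpa using LDer.id B)
        simpa using this
      have := cutPF _ hpf Δ [] P B dΔ base
      simpa using this
  | mul A B _ _ => intro hpf; exact absurd hpf (by simp [ProdFree])
  | star A _ => intro hpf; exact absurd hpf (by simp [ProdFree])

lemma canonical_chain : ∀ (Γ : List LFormula), (∀ A ∈ Γ, ProdFree A) →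
    ∀ g : FreeGroup LFormula,
      RelListComp (Γ.map (REval cw)) g (g * embedW Γ) := by
  intro Γ
  induction Γ with
  | nil => intro _ g; show g = g * embedW []; rw [embedW_nil, mul_one]
  | cons A Γ ih =>
    intro h g
    rw [List.map_cons, rlc_cons]
    refine ⟨g * FreeGroup.of A, ?_, ?_⟩
    · refine (truth A (h A (by simp)) _ _).mpr ⟨[A], LDer.id A, by rw [embedW_single]⟩
    · have := ih (fun B hB => h B (by simp [hB])) (g * FreeGroup.of A)
      have he : g * FreeGroup.of A * embedW Γ = g * embedW (A :: Γ) := by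
        rw [embedW_cons]; group
      rwa [he] at this

lemma PFComplete (Γ : List LFormula) (C : LFormula)
    (hΓ : ∀ A ∈ Γ, ProdFree A) (hC : ProdFree C) (hs : Sem Γ C) : LDer Γ C := by
  have h1 := hs (FreeGroup LFormula) cw 1 (1 * embedW Γ) (canonical_chain Γ hΓ 1)
  obtain ⟨Δ, dΔ, hΔ⟩ := (truth C hC 1 (1 * embedW Γ)).mp h1
  obtain rfl : Δ = Γ := embedW_inj (by rw [one_mul] at hΔ; exact hΔ.symm)
  exact dΔ

lemma sem_mul_expand {Γ Δ : List LFormula} {A B C : LFormula}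
    (h : Sem (Γ ++ [LFormula.mul A B] ++ Δ) C) : Sem (Γ ++ [A, B] ++ Δ) C := by
  intro W w x z hc
  apply h W w x z
  simp only [List.map_append, rlc_append] at hc ⊢
  obtain ⟨y₂, ⟨y₁, hΓ, hm⟩, hΔ⟩ := hc
  refine ⟨y₂, ⟨y₁, hΓ, ?_⟩, hΔ⟩
  rw [List.map_cons, List.map_nil, rlc_single]
  rw [List.map_cons, List.map_cons, List.map_nil, rlc_cons] at hm
  obtain ⟨u, hu1, hu2⟩ := hm
  exact ⟨u, hu1, (rlc_single _ _ _).mp hu2⟩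

lemma sem_star_expand {Γ Δ : List LFormula} {A C : LFormula}
    (h : Sem (Γ ++ [LFormula.star A] ++ Δ) C) (n : ℕ) :
    Sem (Γ ++ List.replicate n A ++ Δ) C := by
  intro W w x z hc
  apply h W w x z
  simp only [List.map_append, rlc_append] at hc ⊢
  obtain ⟨y₂, ⟨y₁, hΓ, hn⟩, hΔ⟩ := hc
  refine ⟨y₂, ⟨y₁, hΓ, ?_⟩, hΔ⟩
  rw [List.map_cons, List.map_nil, rlc_single]
  rw [List.map_replicate] at hn
  exact rtg_of_chain _ n _ _ hn

lemma one_lemma {C : LFormula} :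
    ∀ {A : LFormula}, StarExt A → ∀ Γ Δ : List LFormula,
      (∀ S : List LFormula, (∀ X ∈ S, ProdFree X) →
        Sem (Γ ++ S ++ Δ) C → LDer (Γ ++ S ++ Δ) C) →
      Sem (Γ ++ [A] ++ Δ) C → LDer (Γ ++ [A] ++ Δ) C := by
  intro A hA
  induction hA with
  | @pf A hpfA =>
    intro Γ Δ hyp hs
    exact hyp [A] (by simpa using hpfA) hs
  | @mul A₁ A₂ h₁ h₂ ih₁ ih₂ =>
    intro Γ Δ hyp hs
    have hs' : Sem (Γ ++ [A₁] ++ ([A₂] ++ Δ)) C := by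
      have := sem_mul_expand hs
      simpa [List.append_assoc] using this
    have step : LDer (Γ ++ [A₁] ++ ([A₂] ++ Δ)) C := by
      refine ih₁ Γ ([A₂] ++ Δ) ?_ hs'
      intro S₁ hS₁ hsem₁
      have hres : LDer ((Γ ++ S₁) ++ [A₂] ++ Δ) C := by
        refine ih₂ (Γ ++ S₁) Δ ?_ (by simpa [List.append_assoc] using hsem₁)
        intro S₂ hS₂ hsem₂
        have := hyp (S₁ ++ S₂)
          (by intro X hX; rcases List.mem_append.mp hX with hh | hh
              exacts [hS₁ X hh, hS₂ X hh])
          (by simpa [List.append_assoc] using hsem₂)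
        simpa [List.append_assoc] using this
      simpa [List.append_assoc] using hres
    have := LDer.mul_left Γ Δ A₁ A₂ C (by simpa [List.append_assoc] using step)
    exact this
  | @star A₀ h₀ ih₀ =>
    intro Γ Δ hyp hs
    have G : ∀ n (Γ' : List LFormula),
        (∀ S, (∀ X ∈ S, ProdFree X) → Sem (Γ' ++ S ++ Δ) C → LDer (Γ' ++ S ++ Δ) C) →
        Sem (Γ' ++ List.replicate n A₀ ++ Δ) C →
        LDer (Γ' ++ List.replicate n A₀ ++ Δ) C := by
      intro n
      induction n with
      | zero =>
        intro Γ' hyp' hs'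
        simpa using hyp' [] (by simp) (by simpa using hs')
      | succ n ihn =>
        intro Γ' hyp' hs'
        have hyp'' : ∀ S₁, (∀ X ∈ S₁, ProdFree X) →
            Sem (Γ' ++ S₁ ++ (List.replicate n A₀ ++ Δ)) C →
            LDer (Γ' ++ S₁ ++ (List.replicate n A₀ ++ Δ)) C := by
          intro S₁ hS₁ hsem₁
          have inner : ∀ S₂, (∀ X ∈ S₂, ProdFree X) →
              Sem ((Γ' ++ S₁) ++ S₂ ++ Δ) C → LDer ((Γ' ++ S₁) ++ S₂ ++ Δ) C := by
            intro S₂ hS₂ hsem₂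
            have := hyp' (S₁ ++ S₂)
              (by intro X hX; rcases List.mem_append.mp hX with hh | hh
                  exacts [hS₁ X hh, hS₂ X hh])
              (by simpa [List.append_assoc] using hsem₂)
            simpa [List.append_assoc] using this
          have := ihn (Γ' ++ S₁) inner (by simpa [List.append_assoc] using hsem₁)
          simpa [List.append_assoc] using this
        have hstep := ih₀ Γ' (List.replicate n A₀ ++ Δ) hyp''
          (by rw [List.replicate_succ] at hs'; simpa [List.append_assoc] using hs')
        rw [List.replicate_succ]
        simpa [List.append_assoc] using hstep
    exact LDer.star_left Γ Δ A₀ C (fun n => G n Γ hyp (sem_star_expand hs n))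

lemma main_red {C : LFormula} (hC : ProdFree C) :
    ∀ Δ : List LFormula, (∀ A ∈ Δ, StarExt A) →
    ∀ Γ : List LFormula, (∀ A ∈ Γ, ProdFree A) →
      Sem (Γ ++ Δ) C → LDer (Γ ++ Δ) C := by
  intro Δ
  induction Δ with
  | nil =>
    intro _ Γ hΓ hs
    simpa using PFComplete Γ C hΓ hC (by simpa using hs)
  | cons A Δ ih =>
    intro hΔ Γ hΓ hs
    have hyp : ∀ S, (∀ X ∈ S, ProdFree X) → Sem (Γ ++ S ++ Δ) C → LDer (Γ ++ S ++ Δ) C := by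
      intro S hS hsem
      have := ih (fun B hB => hΔ B (by simp [hB])) (Γ ++ S)
        (by intro X hX; rcases List.mem_append.mp hX with hh | hh
            exacts [hΓ X hh, hS X hh])
        (by simpa [List.append_assoc] using hsem)
      simpa [List.append_assoc] using this
    have := one_lemma (hΔ A (by simp)) Γ Δ hyp (by simpa [List.append_assoc] using hs)
    simpa [List.append_assoc] using this


/-- Completeness of the *-external fragment of L*ω w.r.t. relational models:
a *-external sequent is derivable in L*ω iff it is true in every R-model, i.e.
w(A₁)∘…∘w(A_n) ⊆ w(B) for every type W and every valuation w of the variables by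
binary relations on W (for the empty antecedent: the identity relation is
contained in w(B)). -/
theorem star_external_Rmodel_completeness (Γ : List LFormula) (B : LFormula)
    (hΓ : ∀ A ∈ Γ, StarExt A) (hB : ProdFree B) :
    LDer Γ B ↔ ∀ (W : Type) (w : ℕ → W → W → Prop) (x zz : W),
      RelListComp (Γ.map (REval w)) x zz → REval w B x zz := by
  
  constructor
  · intro d
    exact soundness d
  · intro h
    have hs : Sem Γ B := h
    have := main_red hB Γ hΓ [] (by simp) (by simpa using hs)
    simpa using this
end ListSplit
end
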